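/- arXiv:1703.02837 — 2 statements merged into one kernel-verified Lean document; each statement's English description precedes it below -/
import Mathlib

section
/- Termination of the approximation rewrite system: the priority rewrite system ⇒_AP consisting of the Refinement, Monadic, Shallow, and Linear transformations (with priority Refinement > Monadic > Shallow > Linear, and Refinement applied only finitely often) terminates: there is no infinite sequence N_0 ⇒_AP N_1 ⇒_AP N_2 ⇒_AP ⋯. -/
/- Common formalization of first-order clauses with straight dismatching
   constraints (SDC), following Teucke & Weidenbach,
   "Decidability of the Monadic Shallow Linear First-Order Fragment with
   Straight Dismatching Constraints". -/

set_option linter.unusedVariables false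

namespace SDCPaper

/-- A first-order signature: function symbols and predicate symbols.
    (Symbols are applied to argument lists; arities are not fixed.) -/
structure Sig : Type 1 where
  Func : Type
  Pred : Type

variable {S : Sig}

/-- First-order terms; variables are indexed by natural numbers. -/
inductive Term (S : Sig) : Type where
  | var : Nat → Term S
  | app : S.Func → List (Term S) → Term S

/-- Substitutions. -/
abbrev Subst (S : Sig) := Nat → Term S

/-- Applying a substitution to a term. -/
def Term.subst (σ : Subst S) : Term S → Term S
  | .var x => σ x
  | .app f ts => .app f (ts.attach.map fun t => Term.subst σ t.1)
  decreasing_by simp_wf; have := List.sizeOf_lt_of_mem t.2; omega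

/-- The list of (occurrences of) variables of a term. -/
def Term.varList : Term S → List Nat
  | .var x => [x]
  | .app _ ts => (ts.attach.map fun t => Term.varList t.1).flatten
  decreasing_by simp_wf; have := List.sizeOf_lt_of_mem t.2; omega

/-- Term depth: variables have depth 0, applications depth 1 + max of arguments. -/
def Term.depth : Term S → Nat
  | .var _ => 0
  | .app _ ts => ((ts.attach.map fun t => Term.depth t.1).foldr max 0) + 1
  decreasing_by simp_wf; have := List.sizeOf_lt_of_mem t.2; omega

/-- The subterm of `t` at a position (a sequence of argument indices), if any. -/
def Term.atPos : Term S → List Nat → Option (Term S)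
  | t, [] => some t
  | Term.var _, _ :: _ => none
  | Term.app _ ts, i :: r => (ts[i]?).bind fun u => Term.atPos u r
  termination_by t p => p.length

/-- `r` is a position of the term `t`. -/
inductive Term.HasPos : Term S → List Nat → Prop
  | nil (t : Term S) : Term.HasPos t []
  | cons (f : S.Func) (ts : List (Term S)) (i : Nat) (r : List Nat) (t : Term S) :
      ts[i]? = some t → Term.HasPos t r → Term.HasPos (.app f ts) (i :: r)

def Term.IsGround (t : Term S) : Prop := t.varList = []

def Term.Linear (t : Term S) : Prop := t.varList.Nodup

def Term.Shallow (t : Term S) : Prop := t.depth ≤ 1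

/-- A term is complex if it is not a variable. -/
def Term.IsComplex : Term S → Prop
  | .var _ => False
  | .app _ _ => True

/-- A term is straight if it is a variable, or a function applied to
    pairwise distinct variables except for at most one straight argument. -/
inductive Straight : Term S → Prop
  | var (x : Nat) : Straight (.var x)
  | allVars (f : S.Func) (ts : List (Term S)) :
      (∀ t ∈ ts, ∃ x, t = Term.var x) → ts.Nodup → Straight (.app f ts)
  | oneArg (f : S.Func) (ts₁ ts₂ : List (Term S)) (s : Term S) :
      Straight s →
      (∀ t ∈ ts₁ ++ ts₂, ∃ x, t = Term.var x) →
      (ts₁ ++ s :: ts₂).Nodup →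
      Straight (.app f (ts₁ ++ s :: ts₂))

/-- `s` is a strict subterm of `t`. -/
inductive StrictSubterm : Term S → Term S → Prop
  | arg (s : Term S) (f : S.Func) (ts : List (Term S)) :
      s ∈ ts → StrictSubterm s (.app f ts)
  | deep (s t : Term S) (f : S.Func) (ts : List (Term S)) :
      t ∈ ts → StrictSubterm s t → StrictSubterm s (.app f ts)

/-- Replacement of exactly one occurrence of the variable `x` by `x'`. -/
inductive ReplOne (x x' : Nat) : Term S → Term S → Prop
  | var : ReplOne x x' (.var x) (.var x')
  | app (f : S.Func) (ts₁ ts₂ : List (Term S)) (t t' : Term S) :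
      ReplOne x x' t t' →
      ReplOne x x' (.app f (ts₁ ++ t :: ts₂)) (.app f (ts₁ ++ t' :: ts₂))

/-- The function symbol `f` occurs in the term. -/
inductive FuncInTerm (f : S.Func) : Term S → Prop
  | head (ts : List (Term S)) : FuncInTerm f (.app f ts)
  | arg (g : S.Func) (ts : List (Term S)) (t : Term S) :
      t ∈ ts → FuncInTerm f t → FuncInTerm f (.app g ts)

/-- `t` is an instance of `s`. -/
def IsInstanceOf (t s : Term S) : Prop := ∃ σ : Subst S, t = s.subst σ

/-- The substitution `{x ↦ t}`. -/
def single (x : Nat) (t : Term S) : Subst S := fun y => if y = x then t else Term.var y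

def IsGroundSubst (δ : Subst S) : Prop := ∀ x, (δ x).IsGround

/-! ### Atoms, literals and clauses -/

/-- An atom: a predicate applied to a list of argument terms. -/
structure Atom (S : Sig) : Type where
  pred : S.Pred
  args : List (Term S)

def Atom.subst (σ : Subst S) (A : Atom S) : Atom S :=
  ⟨A.pred, A.args.map (Term.subst σ)⟩

def Atom.varList (A : Atom S) : List Nat := (A.args.map Term.varList).flatten

def Atom.IsGround (A : Atom S) : Prop := ∀ t ∈ A.args, t.IsGround

/-- A monadic atom has exactly one argument. -/
def Atom.Monadic (A : Atom S) : Prop := A.args.length = 1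

def Atom.HasPos (A : Atom S) (r : List Nat) : Prop :=
  r = [] ∨ ∃ i rr, r = i :: rr ∧ ∃ t, A.args[i]? = some t ∧ Term.HasPos t rr

/-- The argument subterm of an atom at a (non-empty) position. -/
def Atom.atPos (A : Atom S) : List Nat → Option (Term S)
  | [] => none
  | i :: r => (A.args[i]?).bind fun t => t.atPos r

def VarInAtom (x : Nat) (A : Atom S) : Prop := x ∈ A.varList

def IsVarAtom (A : Atom S) : Prop := ∃ x, A.args = [Term.var x]

/-- A clause `Γ → Δ`: multiset `ante` of negative atoms and multiset `succ`
    of positive atoms. -/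
structure Clause (S : Sig) : Type where
  ante : Multiset (Atom S)
  succ : Multiset (Atom S)

def Clause.subst (σ : Subst S) (C : Clause S) : Clause S :=
  ⟨C.ante.map (Atom.subst σ), C.succ.map (Atom.subst σ)⟩

def Clause.IsGround (C : Clause S) : Prop :=
  (∀ A ∈ C.ante, A.IsGround) ∧ (∀ A ∈ C.succ, A.IsGround)

/-- Equality of clauses modulo duplicate literal elimination. -/
def Clause.SameLits (C D : Clause S) : Prop :=
  (∀ A, A ∈ C.ante ↔ A ∈ D.ante) ∧ (∀ A, A ∈ C.succ ↔ A ∈ D.succ)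

/-- A literal: a sign (`true` = positive) together with an atom. -/
abbrev Lit (S : Sig) := Bool × Atom S

/-- The literals of a clause. -/
def Clause.lits (C : Clause S) : Multiset (Lit S) :=
  C.ante.map (fun A => (false, A)) + C.succ.map (fun A => (true, A))

def LitIn (L : Lit S) (C : Clause S) : Prop := L ∈ C.lits

/-! ### Straight dismatching constraints -/

/-- A straight dismatching constraint: either the trivially false constraint
    `⊥` or a conjunction of atomic constraints `t ≠ s` (pairs `(t, s)`). -/
inductive Constr (S : Sig) : Type where
  | bot : Constr S
  | conj : List (Term S × Term S) → Constr S

def Constr.and : Constr S → Constr S → Constr S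
  | .bot, _ => .bot
  | .conj _, .bot => .bot
  | .conj a, .conj b => .conj (a ++ b)

/-- Instantiation of a constraint: substitutions apply to left-hand sides. -/
def Constr.subst (σ : Subst S) : Constr S → Constr S
  | .bot => .bot
  | .conj cs => .conj (cs.map fun c => (c.1.subst σ, c.2))

/-- Depth of a constraint: maximal term depth of right-hand sides. -/
def Constr.depth : Constr S → Nat
  | .bot => 0
  | .conj cs => (cs.map fun c => c.2.depth).foldr max 0

/-- Well-formedness: right-hand sides straight, sides variable disjoint. -/
def Constr.WF : Constr S → Prop
  | .bot => True
  | .conj cs => ∀ c ∈ cs, Straight c.2 ∧ ∀ x ∈ c.1.varList, x ∉ c.2.varList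

def Constr.HasVar (x : Nat) : Constr S → Prop
  | .bot => False
  | .conj cs => ∃ c ∈ cs, x ∈ c.1.varList ∨ x ∈ c.2.varList

def Constr.HasFunc (f : S.Func) : Constr S → Prop
  | .bot => False
  | .conj cs => ∃ c ∈ cs, FuncInTerm f c.1 ∨ FuncInTerm f c.2

/-- `π'` contains a subset of the atomic constraints of `π`. -/
def Constr.Sub : Constr S → Constr S → Prop
  | .bot, .bot => True
  | .conj a, .conj b => ∀ c ∈ a, c ∈ b
  | _, _ => False

/-- A solution of a constraint: a grounding substitution making every
    left-hand side a non-instance of the corresponding right-hand side. -/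
def Solves (δ : Subst S) : Constr S → Prop
  | .bot => False
  | .conj cs => IsGroundSubst δ ∧ ∀ c ∈ cs, ¬ IsInstanceOf (c.1.subst δ) c.2

def Constr.Solvable (π : Constr S) : Prop := ∃ δ, Solves δ π

/-! ### Constraint normalization -/

/-- One step of the constraint normalization rewrite system. -/
inductive NormStep : Constr S → Constr S → Prop
  | funVar (pre post : List (Term S × Term S)) (f : S.Func) (ts : List (Term S)) (y : Nat) :
      NormStep (.conj (pre ++ (Term.app f ts, Term.var y) :: post)) .bot
  | funVars (pre post : List (Term S × Term S)) (f : S.Func) (ts ss : List (Term S)) :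
      (∀ s ∈ ss, ∃ x, s = Term.var x) → ss.Nodup → ts.length = ss.length →
      NormStep (.conj (pre ++ (Term.app f ts, Term.app f ss) :: post)) .bot
  | decomp (pre post : List (Term S × Term S)) (f : S.Func) (ts ss : List (Term S))
      (i : Nat) (hts : i < ts.length) (hss : i < ss.length) :
      ts.length = ss.length → (ss.get ⟨i, hss⟩).IsComplex →
      NormStep (.conj (pre ++ (Term.app f ts, Term.app f ss) :: post))
               (.conj (pre ++ (ts.get ⟨i, hts⟩, ss.get ⟨i, hss⟩) :: post))
  | clash (pre post : List (Term S × Term S)) (f g : S.Func) (ts ss : List (Term S)) :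
      f ≠ g →
      NormStep (.conj (pre ++ (Term.app f ts, Term.app g ss) :: post)) (.conj (pre ++ post))
  | subsume (pre mid post : List (Term S × Term S)) (x : Nat) (s : Term S) (σ : Subst S) :
      NormStep (.conj (pre ++ (Term.var x, s) :: mid ++ (Term.var x, Term.subst σ s) :: post))
               (.conj (pre ++ (Term.var x, s) :: mid ++ post))
  | subsume' (pre mid post : List (Term S × Term S)) (x : Nat) (s : Term S) (σ : Subst S) :
      NormStep (.conj (pre ++ (Term.var x, Term.subst σ s) :: mid ++ (Term.var x, s) :: post))
               (.conj (pre ++ (Term.var x, s) :: mid ++ post))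

def InNormalForm (π : Constr S) : Prop := ∀ π', ¬ NormStep π π'

/-- `π'` is the normal form of `π` under constraint normalization. -/
def IsNormOf (π' π : Constr S) : Prop :=
  Relation.ReflTransGen NormStep π π' ∧ InNormalForm π'

/-! ### Constrained clauses and Herbrand semantics -/

/-- A constrained clause `(C; π)`. -/
abbrev CClause (S : Sig) := Clause S × Constr S

def CClause.subst (σ : Subst S) (c : CClause S) : CClause S :=
  (c.1.subst σ, c.2.subst σ)

/-- The ground instances of a constrained clause. -/
def groundOf (c : CClause S) : Set (Clause S) :=
  {D | ∃ δ, Solves δ c.2 ∧ D = c.1.subst δ}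

/-- A Herbrand interpretation: a set of (ground) atoms. -/
abbrev HIntp (S : Sig) := Set (Atom S)

def SatGround (I : HIntp S) (C : Clause S) : Prop :=
  (∃ A ∈ C.succ, A ∈ I) ∨ (∃ A ∈ C.ante, A ∉ I)

def SatCC (I : HIntp S) (c : CClause S) : Prop := ∀ D ∈ groundOf c, SatGround I D

def SatSet (I : HIntp S) (N : Set (CClause S)) : Prop := ∀ c ∈ N, SatCC I c

def Satisfiable (N : Set (CClause S)) : Prop := ∃ I, SatSet I N

def groundN (N : Set (CClause S)) : Set (Clause S) := {D | ∃ c ∈ N, D ∈ groundOf c}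

def CClause.HasVar (x : Nat) (c : CClause S) : Prop :=
  (∃ A ∈ c.1.ante, VarInAtom x A) ∨ (∃ A ∈ c.1.succ, VarInAtom x A) ∨ c.2.HasVar x

def Atom.HasFunc (f : S.Func) (A : Atom S) : Prop := ∃ t ∈ A.args, FuncInTerm f t

def CClause.HasFunc (f : S.Func) (c : CClause S) : Prop :=
  (∃ A ∈ c.1.ante, A.HasFunc f) ∨ (∃ A ∈ c.1.succ, A.HasFunc f) ∨ c.2.HasFunc f

def CClause.HasPred (P : S.Pred) (c : CClause S) : Prop :=
  (∃ A ∈ c.1.ante, A.pred = P) ∨ (∃ A ∈ c.1.succ, A.pred = P)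

def PredInSet (P : S.Pred) (N : Set (CClause S)) : Prop := ∃ c ∈ N, c.HasPred P

def FuncInSet (f : S.Func) (N : Set (CClause S)) : Prop := ∃ c ∈ N, c.HasFunc f

/-- Equality of constraints modulo duplicate atomic constraints. -/
def Constr.SameAtoms : Constr S → Constr S → Prop
  | .bot, .bot => True
  | .conj a, .conj b => ∀ p, p ∈ a ↔ p ∈ b
  | _, _ => False

/-- Equality of constrained clauses modulo duplicate literal elimination. -/
def CClause.EqModDup (c d : CClause S) : Prop :=
  c.1.SameLits d.1 ∧ Constr.SameAtoms c.2 d.2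

/-- `D` is a ground instance of `(C;π)` modulo duplicate literal elimination. -/
def GroundInstanceModDup (D : Clause S) (c : CClause S) : Prop :=
  ∃ δ, Solves δ c.2 ∧ Clause.SameLits D (c.1.subst δ)

/-- `c` is an instance of `c'` (modulo duplicate literal elimination). -/
def InstanceOfCCModDup (c c' : CClause S) : Prop :=
  ∀ D ∈ groundOf c, ∃ D' ∈ groundOf c', Clause.SameLits D D'

/-! ### Unification -/

def IsUnifier (σ : Subst S) (A B : Atom S) : Prop := A.subst σ = B.subst σ

/-- `σ` is a most general unifier of atoms `A` and `B`. -/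
def IsMGU (σ : Subst S) (A B : Atom S) : Prop :=
  IsUnifier σ A B ∧
  ∀ τ : Subst S, IsUnifier τ A B → ∃ ρ : Subst S, ∀ x, τ x = (σ x).subst ρ

/-! ### Orderings -/

/-- Dershowitz-Manna multiset extension (strict). -/
def MulLT {α : Type} (r : α → α → Prop) (M N : Multiset α) : Prop :=
  ∃ X Y Z, N = Z + X ∧ M = Z + Y ∧ X ≠ 0 ∧ ∀ y ∈ Y, ∃ x ∈ X, r y x

/-- Multiset encoding of literals: `A ↦ {A}`, `¬A ↦ {A, A}`. -/
def litMS : Lit S → Multiset (Atom S)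
  | (true, A) => {A}
  | (false, A) => {A, A}

/-- The literal ordering induced by an atom ordering. -/
def LitLT (r : Atom S → Atom S → Prop) (L L' : Lit S) : Prop :=
  MulLT r (litMS L) (litMS L')

def LitLE (r : Atom S → Atom S → Prop) (L L' : Lit S) : Prop :=
  LitLT r L L' ∨ L = L'

/-- The clause ordering: multiset extension of the literal ordering. -/
def ClauseLT (r : Atom S → Atom S → Prop) (C D : Clause S) : Prop :=
  MulLT (LitLT r) C.lits D.lits

/-- An atom ordering: irreflexive, transitive, total on ground atoms,
    and well-founded. -/
structure AtomOrder (S : Sig) : Type 1 where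
  lt : Atom S → Atom S → Prop
  irrefl : ∀ A, ¬ lt A A
  trans : ∀ A B C, lt A B → lt B C → lt A C
  total : ∀ A B, A.IsGround → B.IsGround → lt A B ∨ lt B A ∨ A = B
  wf : WellFounded lt

/-- The ordering condition of Section 3: a literal `¬Q(s)` is never greater
    than a literal `P(t[s]ₚ)` for `p ≠ ε`. -/
def SelOrderCond (ord : AtomOrder S) : Prop :=
  ∀ (P Q : S.Pred) (s t : Term S), StrictSubterm s t →
    ¬ LitLT ord.lt ((true, ⟨P, [t]⟩) : Lit S) ((false, ⟨Q, [s]⟩) : Lit S)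

/-! ### Selection and the inference rules -/

def VarInSucc (x : Nat) (C : Clause S) : Prop := ∃ A ∈ C.succ, VarInAtom x A

/-- The superposition selection function `sel` (Definition 2). -/
def Selected (C : Clause S) (A : Atom S) : Prop :=
  A ∈ C.ante ∧
  ( (¬ IsVarAtom A)
    ∨ ((∀ B ∈ C.ante, IsVarAtom B) ∧ ∃ x, A.args = [Term.var x] ∧ ¬ VarInSucc x C)
    ∨ ((∀ B ∈ C.ante, ∃ y, B.args = [Term.var y] ∧ VarInSucc y C) ∧
       (∃ x, A.args = [Term.var x] ∧ ∃ B ∈ C.succ, B.args = [Term.var x])) )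

def NoSel (C : Clause S) : Prop := ∀ A, ¬ Selected C A

/-- `A` is strictly maximal w.r.t. the remaining clause `rest` under
    constraint `π` (Definition 3). -/
def StrictlyMaxIn (r : Atom S → Atom S → Prop) (A : Atom S) (rest : Clause S) (π : Constr S) : Prop :=
  ∃ δ, Solves δ π ∧ ∀ L ∈ (rest.subst δ).lits, LitLT r L (true, A.subst δ)

def MaxIn (r : Atom S → Atom S → Prop) (A : Atom S) (rest : Clause S) (π : Constr S) : Prop :=
  ∃ δ, Solves δ π ∧ ∀ L ∈ (rest.subst δ).lits, LitLE r L (true, A.subst δ)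

def MaxNegIn (r : Atom S → Atom S → Prop) (B : Atom S) (rest : Clause S) (π : Constr S) : Prop :=
  ∃ δ, Solves δ π ∧ ∀ L ∈ (rest.subst δ).lits, LitLE r L (false, B.subst δ)

/-- SDC-Resolution (Definition 4). -/
def IsResolvent (r : Atom S → Atom S → Prop) (p1 p2 concl : CClause S) : Prop :=
  ∃ (Γ₁ Δ₁ Γ₂ Δ₂ : Multiset (Atom S)) (A B : Atom S) (π₁ π₂ π : Constr S) (σ : Subst S),
    p1 = (⟨Γ₁, A ::ₘ Δ₁⟩, π₁) ∧
    p2 = (⟨B ::ₘ Γ₂, Δ₂⟩, π₂) ∧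
    IsMGU σ A B ∧
    IsNormOf π ((π₁.and π₂).subst σ) ∧
    π.Solvable ∧
    StrictlyMaxIn r (A.subst σ) (Clause.subst σ ⟨Γ₁, Δ₁⟩) (π₁.subst σ) ∧
    NoSel ⟨Γ₁, A ::ₘ Δ₁⟩ ∧
    (Selected ⟨B ::ₘ Γ₂, Δ₂⟩ B ∨
      (NoSel ⟨B ::ₘ Γ₂, Δ₂⟩ ∧ MaxNegIn r (B.subst σ) (Clause.subst σ ⟨Γ₂, Δ₂⟩) (π₂.subst σ))) ∧
    concl = (Clause.subst σ ⟨Γ₁ + Γ₂, Δ₁ + Δ₂⟩, π)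

/-- SDC-Factoring (Definition 5). -/
def IsFactor (r : Atom S → Atom S → Prop) (p concl : CClause S) : Prop :=
  ∃ (Γ Δ : Multiset (Atom S)) (A B : Atom S) (π π' : Constr S) (σ : Subst S),
    p = (⟨Γ, A ::ₘ B ::ₘ Δ⟩, π) ∧
    IsMGU σ A B ∧
    NoSel ⟨Γ, A ::ₘ B ::ₘ Δ⟩ ∧
    MaxIn r (A.subst σ) (Clause.subst σ ⟨Γ, B ::ₘ Δ⟩) (π.subst σ) ∧
    IsNormOf π' (π.subst σ) ∧
    π'.Solvable ∧
    concl = (Clause.subst σ ⟨Γ, A ::ₘ Δ⟩, π')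

/-- Redundancy of a constrained clause in a clause set. -/
def RedundantIn (r : Atom S → Atom S → Prop) (c : CClause S) (N : Set (CClause S)) : Prop :=
  ∀ D ∈ groundOf c, ∃ L : List (Clause S),
    (∀ D' ∈ L, D' ∈ groundN N ∧ ClauseLT r D' D) ∧
    ∀ I : HIntp S, (∀ D' ∈ L, SatGround I D') → SatGround I D

/-- Saturation up to redundancy (Definition 7). -/
def SaturatedUR (r : Atom S → Atom S → Prop) (N : Set (CClause S)) : Prop :=
  (∀ p1 ∈ N, ∀ p2 ∈ N, ∀ c, IsResolvent r p1 p2 c →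
     RedundantIn r c N ∨ groundOf c ⊆ groundN N) ∧
  (∀ p ∈ N, ∀ c, IsFactor r p c → RedundantIn r c N ∨ groundOf c ⊆ groundN N)

/-! ### Partial minimal model construction (Definition 9) -/

def ProducedAtoms (r : Atom S → Atom S → Prop) (G : Set (Clause S))
    (prod : Clause S → Set (Atom S)) (D : Clause S) : HIntp S :=
  {A | ∃ D' ∈ G, ClauseLT r D' D ∧ A ∈ prod D'}

/-- `prod` assigns to each ground clause its produced atoms according to the
    superposition partial model construction. -/
def IsModelConstruction (r : Atom S → Atom S → Prop) (G : Set (Clause S))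
    (prod : Clause S → Set (Atom S)) : Prop :=
  (∀ D, D ∉ G → prod D = ∅) ∧
  ∀ D ∈ G, prod D =
    {A | ∃ Δ, D.succ = A ::ₘ Δ ∧
      (∀ L ∈ (Clause.lits ⟨D.ante, Δ⟩), LitLT r L (true, A)) ∧
      NoSel D ∧ ¬ SatGround (ProducedAtoms r G prod D) D}

def ConstructedModel (G : Set (Clause S)) (prod : Clause S → Set (Atom S)) : HIntp S :=
  {A | ∃ D ∈ G, A ∈ prod D}

/-! ### The MSL(SDC) fragment -/

/-- MSL clauses: monadic predicates, positive literals shallow and linear,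
    positive atoms pairwise variable disjoint (no equations occur,
    since atoms are predicate atoms). -/
def IsMSL (C : Clause S) : Prop :=
  (∀ A ∈ C.ante, A.Monadic) ∧ (∀ A ∈ C.succ, A.Monadic) ∧
  (∀ A ∈ C.succ, ∀ t ∈ A.args, t.depth ≤ 1) ∧
  Multiset.Nodup ((C.succ.map (fun A => (A.varList : Multiset Nat))).sum)

def IsMSLSDC (c : CClause S) : Prop := IsMSL c.1 ∧ c.2.WF

/-! ### Condensation -/

/-- `(C';π')` is a condensation of `(C;π)`. -/
def Condensation (c' c : CClause S) : Prop :=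
  (c'.1.ante ≤ c.1.ante ∧ c'.1.succ ≤ c.1.succ ∧ c'.1 ≠ c.1) ∧
  ∃ σ : Subst S,
    c.2.subst σ = c'.2 ∧ Constr.Sub c'.2 c.2 ∧
    (∀ A ∈ c.1.ante, ∃ A' ∈ c'.1.ante, A.subst σ = A') ∧
    (∀ A ∈ c.1.succ, ∃ A' ∈ c'.1.succ, A.subst σ = A')

/-! ### The approximation transformations -/

open Classical in
/-- Monadic projection of an atom: `P(t⃗) ↦ T(f_P(t⃗))`. -/
noncomputable def projAtom (P T : S.Pred) (fP : S.Func) (A : Atom S) : Atom S :=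
  if A.pred = P then ⟨T, [Term.app fP A.args]⟩ else A

noncomputable def projClause (P T : S.Pred) (fP : S.Func) (C : Clause S) : Clause S :=
  ⟨C.ante.map (projAtom P T fP), C.succ.map (projAtom P T fP)⟩

noncomputable def projCC (P T : S.Pred) (fP : S.Func) (c : CClause S) : CClause S :=
  (projClause P T fP c.1, c.2)

/-- The Monadic transformation step. -/
def MonadicStep (P T : S.Pred) (fP : S.Func) (N N' : Set (CClause S)) : Prop :=
  P ≠ T ∧
  (∃ c ∈ N, ∃ A ∈ c.1.ante + c.1.succ, A.pred = P ∧ ¬ A.Monadic) ∧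
  ¬ PredInSet T N ∧ ¬ FuncInSet fP N ∧
  N' = projCC P T fP '' N

/-- The term `f(t⃗₁, s, t⃗₂)` in which `s` occurs at depth one. -/
def shETerm (f : S.Func) (ts₁ ts₂ : List (Term S)) (s : Term S) : Term S :=
  .app f (ts₁ ++ s :: ts₂)

/-- The atom `E[s]ₚ` with `|p| = 2`. -/
def shEAtom (Pr : S.Pred) (as₁ as₂ : List (Term S)) (f : S.Func)
    (ts₁ ts₂ : List (Term S)) (s : Term S) : Atom S :=
  ⟨Pr, as₁ ++ shETerm f ts₁ ts₂ s :: as₂⟩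

/-- The clause `(Γ → E[s]ₚ, Δ; π)`. -/
def shSrc (Γ Δ : Multiset (Atom S)) (π : Constr S) (Pr : S.Pred)
    (as₁ as₂ ts₁ ts₂ : List (Term S)) (f : S.Func) (s : Term S) : CClause S :=
  (⟨Γ, shEAtom Pr as₁ as₂ f ts₁ ts₂ s ::ₘ Δ⟩, π)

/-- The left result `(S(x), Γₗ → E[p/x], Δₗ; π)` of the Shallow transformation. -/
def shLeft (Γl Δl : Multiset (Atom S)) (π : Constr S) (Pr : S.Pred)
    (as₁ as₂ ts₁ ts₂ : List (Term S)) (f : S.Func) (Sp : S.Pred) (x : Nat) : CClause S :=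
  (⟨(⟨Sp, [Term.var x]⟩ : Atom S) ::ₘ Γl,
    shEAtom Pr as₁ as₂ f ts₁ ts₂ (Term.var x) ::ₘ Δl⟩, π)

/-- The right result `(Γᵣ → S(s), Δᵣ; π)` of the Shallow transformation. -/
def shRight (Γr Δr : Multiset (Atom S)) (π : Constr S) (s : Term S) (Sp : S.Pred) : CClause S :=
  (⟨Γr, (⟨Sp, [s]⟩ : Atom S) ::ₘ Δr⟩, π)

/-- Side conditions of the Shallow transformation. -/
def ShallowCond (N : Set (CClause S)) (Γ Δ Γl Γr Δl Δr : Multiset (Atom S)) (π : Constr S)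
    (Pr : S.Pred) (as₁ as₂ ts₁ ts₂ : List (Term S)) (f : S.Func) (s : Term S)
    (Sp : S.Pred) (x : Nat) : Prop :=
  s.IsComplex ∧
  ¬ PredInSet Sp N ∧
  ¬ (shSrc Γ Δ π Pr as₁ as₂ ts₁ ts₂ f s).HasVar x ∧
  Γl.map (Atom.subst (single x s)) + Γr = Γ ∧
  Δl + Δr = Δ ∧
  (∀ (Q : S.Pred) (y : Nat), (⟨Q, [Term.var y]⟩ : Atom S) ∈ Γ →
     (VarInAtom y (shEAtom Pr as₁ as₂ f ts₁ ts₂ (Term.var x)) ∨ ∃ B ∈ Δl, VarInAtom y B) →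
     (⟨Q, [Term.var y]⟩ : Atom S) ∈ Γl) ∧
  (∀ (Q : S.Pred) (y : Nat), (⟨Q, [Term.var y]⟩ : Atom S) ∈ Γ →
     (y ∈ s.varList ∨ ∃ B ∈ Δr, VarInAtom y B) →
     (⟨Q, [Term.var y]⟩ : Atom S) ∈ Γr)

/-- Replacement of one occurrence of variable `x` by `x'` in an atom. -/
def ReplOneAtom (x x' : Nat) (A A' : Atom S) : Prop :=
  ∃ (P : S.Pred) (as₁ as₂ : List (Term S)) (t t' : Term S),
    A = ⟨P, as₁ ++ t :: as₂⟩ ∧ A' = ⟨P, as₁ ++ t' :: as₂⟩ ∧ ReplOne x x' t t'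

/-- The clause `(Γ → E, Δ; π)` transformed by the Linear transformation. -/
def liSrc (Γ Δ : Multiset (Atom S)) (π : Constr S) (E : Atom S) : CClause S :=
  (⟨Γ, E ::ₘ Δ⟩, π)

/-- The result `(Γσ, Γ → E', Δ; π ∧ πσ)` of the Linear transformation,
    `σ = {x ↦ x'}`. -/
def liRes (Γ Δ : Multiset (Atom S)) (π : Constr S) (E' : Atom S) (x x' : Nat) : CClause S :=
  (⟨Γ.map (Atom.subst (single x (Term.var x'))) + Γ, E' ::ₘ Δ⟩,
   π.and (π.subst (single x (Term.var x'))))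

/-- Side conditions of the Linear transformations (both variants): one
    occurrence of the repeated succedent variable `x` is replaced by fresh `x'`. -/
def LinearCond (Γ Δ : Multiset (Atom S)) (π : Constr S) (E E' : Atom S) (x x' : Nat) : Prop :=
  ReplOneAtom x x' E E' ∧
  ¬ (liSrc Γ Δ π E).HasVar x' ∧
  (VarInAtom x E' ∨ ∃ A ∈ Δ, VarInAtom x A)

/-- The first result `(C; π ∧ x ≠ t)` of the Refinement transformation. -/
def refLeft (c : CClause S) (x : Nat) (t : Term S) : CClause S :=
  (c.1, c.2.and (.conj [(Term.var x, t)]))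

/-- The second result `(C;π){x ↦ t}` of the Refinement transformation. -/
def refRight (c : CClause S) (x : Nat) (t : Term S) : CClause S :=
  CClause.subst (single x t) c

/-- Side conditions of the Refinement transformation. -/
def RefineClause (c : CClause S) (x : Nat) (t : Term S) : Prop :=
  ((∃ A ∈ c.1.ante, VarInAtom x A) ∨ ∃ A ∈ c.1.succ, VarInAtom x A) ∧
  Straight t ∧
  (∀ y ∈ t.varList, ¬ c.HasVar y)

/-- The data of a single approximation transformation step. -/
inductive StepData (S : Sig) : Type 1 where
  | mo (P T : S.Pred) (fP : S.Func)
  | sh (Γ Δ : Multiset (Atom S)) (π : Constr S) (Pr : S.Pred)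
       (as₁ as₂ ts₁ ts₂ : List (Term S)) (f : S.Func) (s : Term S)
       (Sp : S.Pred) (x : Nat) (Γl Γr Δl Δr : Multiset (Atom S))
  | li (Γ Δ : Multiset (Atom S)) (π : Constr S) (E E' : Atom S) (x x' : Nat)
  | ref (c : CClause S) (x : Nat) (t : Term S)

/-- One step of the approximation rewrite system `⇒_AP` on clause sets,
    labelled with its data. -/
inductive DStep : Set (CClause S) → StepData S → Set (CClause S) → Prop
  | mo (N N' : Set (CClause S)) (P T : S.Pred) (fP : S.Func) :
      MonadicStep P T fP N N' → DStep N (.mo P T fP) N'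
  | sh (M : Set (CClause S)) (Γ Δ Γl Γr Δl Δr : Multiset (Atom S)) (π : Constr S)
      (Pr : S.Pred) (as₁ as₂ ts₁ ts₂ : List (Term S)) (f : S.Func) (s : Term S)
      (Sp : S.Pred) (x : Nat) :
      shSrc Γ Δ π Pr as₁ as₂ ts₁ ts₂ f s ∉ M →
      ShallowCond (insert (shSrc Γ Δ π Pr as₁ as₂ ts₁ ts₂ f s) M)
        Γ Δ Γl Γr Δl Δr π Pr as₁ as₂ ts₁ ts₂ f s Sp x →
      DStep (insert (shSrc Γ Δ π Pr as₁ as₂ ts₁ ts₂ f s) M)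
        (.sh Γ Δ π Pr as₁ as₂ ts₁ ts₂ f s Sp x Γl Γr Δl Δr)
        (insert (shLeft Γl Δl π Pr as₁ as₂ ts₁ ts₂ f Sp x)
          (insert (shRight Γr Δr π s Sp) M))
  | li (M : Set (CClause S)) (Γ Δ : Multiset (Atom S)) (π : Constr S)
      (E E' : Atom S) (x x' : Nat) :
      liSrc Γ Δ π E ∉ M → LinearCond Γ Δ π E E' x x' →
      DStep (insert (liSrc Γ Δ π E) M) (.li Γ Δ π E E' x x')
        (insert (liRes Γ Δ π E' x x') M)
  | ref (M : Set (CClause S)) (c : CClause S) (x : Nat) (t : Term S) :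
      c ∉ M → RefineClause c x t →
      DStep (insert c M) (.ref c x t)
        (insert (refLeft c x t) (insert (refRight c x t) M))

/-- Priority class of a rule: Refinement 0 > Monadic 1 > Shallow 2 > Linear 3. -/
def StepData.rule : StepData S → Nat
  | .ref _ _ _ => 0
  | .mo _ _ _ => 1
  | .sh _ _ _ _ _ _ _ _ _ _ _ _ _ _ _ _ => 2
  | .li _ _ _ _ _ _ _ => 3

def RuleApplicable (k : Nat) (N : Set (CClause S)) : Prop :=
  ∃ d N', DStep N d N' ∧ StepData.rule d = k

/-- A `⇒_AP` step respecting the rule priorities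
    Refinement > Monadic > Shallow > Linear. -/
def APStepPrio (N : Set (CClause S)) (d : StepData S) (N' : Set (CClause S)) : Prop :=
  DStep N d N' ∧
  (d.rule = 2 → ¬ RuleApplicable 1 N) ∧
  (d.rule = 3 → ¬ RuleApplicable 1 N ∧ ¬ RuleApplicable 2 N)

/-- A finite sequence of approximation steps. -/
inductive DChain : Set (CClause S) → List (StepData S) → Set (CClause S) → Prop
  | nil (N : Set (CClause S)) : DChain N [] N
  | cons {N N' N'' : Set (CClause S)} (d : StepData S) (ls : List (StepData S)) :
      DStep N d N' → DChain N' ls N'' → DChain N (d :: ls) N''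

/-- Reverse monadic projection of an interpretation along an approximation
    sequence: each encoded atom `T(f_P(t⃗))` is replaced back by `P(t⃗)`. -/
noncomputable def revProj : List (StepData S) → HIntp S → HIntp S
  | [], I => I
  | (StepData.mo P T fP) :: ls, I => projAtom P T fP ⁻¹' (revProj ls I)
  | _ :: ls, I => revProj ls I

/-! ### Conflicting cores -/

/-- A (complete) ground conflicting core of a clause set `N`. -/
def IsGroundConflCore (Nb : Set (Clause S)) (N : Set (CClause S)) : Prop :=
  Nb.Finite ∧ (∀ D ∈ Nb, D.IsGround) ∧
  (¬ ∃ I : HIntp S, ∀ D ∈ Nb, SatGround I D) ∧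
  (∀ D ∈ Nb, ∃ c ∈ N, GroundInstanceModDup D c)

def CompleteCore (Nb : Set (Clause S)) : Prop :=
  (∀ D ∈ Nb, ∀ A ∈ D.ante, ∃ D' ∈ Nb, A ∈ D'.succ) ∧
  (∀ D ∈ Nb, ∀ A ∈ D.succ, ∃ D' ∈ Nb, A ∈ D'.ante)

/-- A conflicting core `(N^⊥; π)` of a constrained clause set (Definition 15). -/
def IsConflictingCore (Nb : Set (Clause S)) (π : Constr S) (N : Set (CClause S)) : Prop :=
  Nb.Finite ∧ π.Solvable ∧
  (∀ δ, Solves δ π → ¬ ∃ I : HIntp S, ∀ D ∈ Nb, SatGround I (D.subst δ)) ∧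
  (∀ D ∈ Nb, ∃ c ∈ N, InstanceOfCCModDup (D, π) c)

/-- Lift-conflicts (Definition 17). -/
def IsLiftConflict (d : StepData S) (Nb : Set (Clause S)) (Cc : Clause S) : Prop :=
  match d with
  | .li Γ Δ π E E' x x' =>
      Cc ∈ Nb ∧ GroundInstanceModDup Cc (liRes Γ Δ π E' x x') ∧
      ¬ GroundInstanceModDup Cc (liSrc Γ Δ π E)
  | .sh Γ Δ π Pr as₁ as₂ ts₁ ts₂ f s Sp x Γl Γr Δl Δr =>
      (∃ δl δr : Subst S, Solves δl π ∧ Solves δr π ∧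
         Clause.subst δl (shLeft Γl Δl π Pr as₁ as₂ ts₁ ts₂ f Sp x).1 ∈ Nb ∧
         Clause.subst δr (shRight Γr Δr π s Sp).1 ∈ Nb ∧
         δl x = s.subst δr ∧
         Cc = ⟨Γl.map (Atom.subst δl) + Γr.map (Atom.subst δr),
               Atom.subst δl (shEAtom Pr as₁ as₂ f ts₁ ts₂ (Term.var x)) ::ₘ
                 (Δl.map (Atom.subst δl) + Δr.map (Atom.subst δr))⟩) ∧
      ¬ GroundInstanceModDup Cc (shSrc Γ Δ π Pr as₁ as₂ ts₁ ts₂ f s)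
  | _ => False

/-! ### Parent and ancestor relations -/

/-- The clause is not the one transformed by the step. -/
def UnchangedBy : StepData S → CClause S → Prop
  | .mo _ _ _, _ => False
  | .sh Γ Δ π Pr as₁ as₂ ts₁ ts₂ f s _ _ _ _ _ _, c =>
      c ≠ shSrc Γ Δ π Pr as₁ as₂ ts₁ ts₂ f s
  | .li Γ Δ π E _ _ _, c => c ≠ liSrc Γ Δ π E
  | .ref c0 _ _, c => c ≠ c0

/-- The parent clause relation (Definition 12, without shallow resolvents). -/
def PCrel (d : StepData S) (c c' : CClause S) : Prop :=
  (UnchangedBy d c ∧ c' = c) ∨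
  match d with
  | .mo P T fP => c' = projCC P T fP c
  | .sh Γ Δ π Pr as₁ as₂ ts₁ ts₂ f s Sp x Γl Γr Δl Δr =>
      c = shSrc Γ Δ π Pr as₁ as₂ ts₁ ts₂ f s ∧
      (c' = shLeft Γl Δl π Pr as₁ as₂ ts₁ ts₂ f Sp x ∨ c' = shRight Γr Δr π s Sp)
  | .li Γ Δ π E E' x x' => c = liSrc Γ Δ π E ∧ c' = liRes Γ Δ π E' x x'
  | .ref c0 x t => c = c0 ∧ (c' = refLeft c0 x t ∨ c' = refRight c0 x t)

/-- The parent variable relation (Definition 13). -/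
def PV (d : StepData S) (c : CClause S) (x : Nat) (c' : CClause S) (y : Nat) : Prop :=
  (PCrel d c c' ∧ c.HasVar x ∧ c'.HasVar x ∧ y = x) ∨
  (match d with
   | .li Γ Δ π E E' x0 x0' =>
       c = liSrc Γ Δ π E ∧ c' = liRes Γ Δ π E' x0 x0' ∧ x = x0 ∧ y = x0'
   | _ => False)

/-- The parent literal position relation (Definition 14). A literal position
    is a pair of a literal and a position within it. -/
def PLP (d : StepData S) (c : CClause S) (L : Lit S) (r : List Nat)
    (c' : CClause S) (L' : Lit S) (r' : List Nat) : Prop :=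
  (UnchangedBy d c ∧ c' = c ∧ L' = L ∧ r' = r ∧ LitIn L c.1 ∧ L.2.HasPos r) ∨
  match d with
  | .mo P T fP =>
      c' = projCC P T fP c ∧ LitIn L c.1 ∧ L.2.HasPos r ∧
      ((L.2.pred ≠ P ∧ L' = L ∧ r' = r) ∨
       (L.2.pred = P ∧ L' = (L.1, ⟨T, [Term.app fP L.2.args]⟩) ∧
         ((r = [] ∧ r' = []) ∨ ∃ i rr, r = i :: rr ∧ r' = 0 :: i :: rr)))
  | .sh Γ Δ π Pr as₁ as₂ ts₁ ts₂ f s Sp x Γl Γr Δl Δr =>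
      c = shSrc Γ Δ π Pr as₁ as₂ ts₁ ts₂ f s ∧
      ( (c' = shLeft Γl Δl π Pr as₁ as₂ ts₁ ts₂ f Sp x ∧
          ( (L = (true, shEAtom Pr as₁ as₂ f ts₁ ts₂ s) ∧
             L' = (true, shEAtom Pr as₁ as₂ f ts₁ ts₂ (Term.var x)) ∧
             r' = r ∧ (shEAtom Pr as₁ as₂ f ts₁ ts₂ (Term.var x)).HasPos r) ∨
            (L = (true, shEAtom Pr as₁ as₂ f ts₁ ts₂ s) ∧ r = [as₁.length, ts₁.length] ∧
             L' = (false, (⟨Sp, [Term.var x]⟩ : Atom S)) ∧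
             (⟨Sp, [Term.var x]⟩ : Atom S).HasPos r') ∨
            (∃ A ∈ Γl, L = (false, A.subst (single x s)) ∧ L' = (false, A) ∧
               r' = r ∧ A.HasPos r) ∨
            (∃ A ∈ Δl, L = (true, A) ∧ L' = (true, A) ∧ r' = r ∧ A.HasPos r))) ∨
        (c' = shRight Γr Δr π s Sp ∧
          ( (L = (true, shEAtom Pr as₁ as₂ f ts₁ ts₂ s) ∧ r = [as₁.length, ts₁.length] ∧
             L' = (true, (⟨Sp, [s]⟩ : Atom S)) ∧ r' = []) ∨
            (∃ rr, L = (true, shEAtom Pr as₁ as₂ f ts₁ ts₂ s) ∧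
               r = as₁.length :: ts₁.length :: rr ∧
               L' = (true, (⟨Sp, [s]⟩ : Atom S)) ∧ r' = 0 :: rr ∧ Term.HasPos s rr) ∨
            (∃ A ∈ Γr, L = (false, A) ∧ L' = (false, A) ∧ r' = r ∧ A.HasPos r) ∨
            (∃ A ∈ Δr, L = (true, A) ∧ L' = (true, A) ∧ r' = r ∧ A.HasPos r))) )
  | .li Γ Δ π E E' x x' =>
      c = liSrc Γ Δ π E ∧ c' = liRes Γ Δ π E' x x' ∧
      ( (L = (true, E) ∧ L' = (true, E') ∧ r' = r ∧ E'.HasPos r) ∨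
        (∃ A ∈ Δ, L = (true, A) ∧ L' = (true, A) ∧ r' = r ∧ A.HasPos r) ∨
        (∃ A ∈ Γ, L = (false, A) ∧ L' = (false, A.subst (single x (Term.var x'))) ∧
           r' = r ∧ A.HasPos r) ∨
        (∃ A ∈ Γ, L = (false, A) ∧ L' = (false, A) ∧ r' = r ∧ A.HasPos r) )
  | .ref c0 x t =>
      c = c0 ∧ LitIn L c.1 ∧ L.2.HasPos r ∧
      ( (c' = refLeft c0 x t ∧ L' = L ∧ r' = r) ∨
        (c' = refRight c0 x t ∧ L' = (L.1, L.2.subst (single x t)) ∧ r' = r) )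

/-- Ancestor clause relation along an approximation sequence. -/
inductive AncC : List (StepData S) → CClause S → CClause S → Prop
  | nil (c : CClause S) : AncC [] c c
  | cons {d : StepData S} {ls : List (StepData S)} {c c' c'' : CClause S} :
      PCrel d c c' → AncC ls c' c'' → AncC (d :: ls) c c''

/-- Ancestor literal position relation along an approximation sequence. -/
inductive AncLP : List (StepData S) → CClause S → Lit S → List Nat →
    CClause S → Lit S → List Nat → Prop
  | nil (c : CClause S) (L : Lit S) (r : List Nat) : AncLP [] c L r c L r
  | cons {d : StepData S} {ls : List (StepData S)} {c c' c'' : CClause S}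
      {L L' L'' : Lit S} {r r' r'' : List Nat} :
      PLP d c L r c' L' r' → AncLP ls c' L' r' c'' L'' r'' →
      AncLP (d :: ls) c L r c'' L'' r''

/-- Ancestor variable relation along an approximation sequence. -/
inductive AncV : List (StepData S) → CClause S → Nat → CClause S → Nat → Prop
  | nil (c : CClause S) (x : Nat) : AncV [] c x c x
  | cons {d : StepData S} {ls : List (StepData S)} {c c' c'' : CClause S}
      {x y z : Nat} :
      PV d c x c' y → AncV ls c' y c'' z → AncV (d :: ls) c x c'' z

/-! ### Constrained term skeletons and descendants -/

/-- One step of the constrained term skeleton transformation: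
    `(t[x]_{p,q}; π) ⇒ (t[q/x']; π ∧ π{x ↦ x'})`. -/
inductive SktStep : Term S × Constr S → Term S × Constr S → Prop
  | step (t t' : Term S) (x x' : Nat) (π : Constr S) :
      ReplOne x x' t t' → x ∈ t'.varList → x' ∉ t.varList → ¬ π.HasVar x' →
      SktStep (t, π) (t', π.and (π.subst (single x (Term.var x'))))

/-- `(u, π')` is the constrained term skeleton of `(t, π)`. -/
def IsSktOf (uπ tπ : Term S × Constr S) : Prop :=
  Relation.ReflTransGen SktStep tπ uπ ∧ ∀ z, ¬ SktStep uπ z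

/-- Descendant relation (Definition 16): `D = C'δ` is a descendant of `(C;π)`
    and its literal `L'δ` maps to the literal position `(L, r)` of `(C;π)`. -/
def DescRel (ls : List (StepData S)) (c c' : CClause S) (δ : Subst S)
    (Lg : Lit S) (L : Lit S) (r : List Nat) : Prop :=
  ∃ L' : Lit S, Lg = (L'.1, L'.2.subst δ) ∧ LitIn Lg (c'.1.subst δ) ∧
    AncLP ls c L r c' L' []

/-! ### Saturation steps (inference, condensation, variant removal) -/

inductive SatStep (r : Atom S → Atom S → Prop) : Set (CClause S) → Set (CClause S) → Prop
  | infer (N : Set (CClause S)) (c : CClause S) :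
      (∃ p1 ∈ N, ∃ p2 ∈ N, IsResolvent r p1 p2 c) → SatStep r N (insert c N)
  | factor (N : Set (CClause S)) (c : CClause S) :
      (∃ p ∈ N, IsFactor r p c) → SatStep r N (insert c N)
  | condense (N : Set (CClause S)) (c c' : CClause S) :
      c ∈ N → Condensation c' c → SatStep r N (insert c' (N \ {c}))
  | delVariant (N : Set (CClause S)) (c c' : CClause S) :
      c ∈ N → c' ∈ N → c ≠ c' → groundOf c = groundOf c' → SatStep r N (N \ {c})

/-- Variables shared between two constrained clauses. -/
def ShVar (c c' : CClause S) (v : Nat) : Prop := c.HasVar v ∧ c'.HasVar v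

/-- The shallow ρ-resolvent (Definition 11):
    `(Γₗ{x ↦ sρ}, Γᵣρ → E[p/sρ], Δₗ, Δᵣρ; π ∧ πρ)`. -/
def shResolvent (Γl Γr Δl Δr : Multiset (Atom S)) (π : Constr S) (Pr : S.Pred)
    (as₁ as₂ ts₁ ts₂ : List (Term S)) (f : S.Func) (s : Term S) (x : Nat)
    (ρ : Subst S) : CClause S :=
  (⟨Γl.map (Atom.subst (single x (s.subst ρ))) + Γr.map (Atom.subst ρ),
    shEAtom Pr as₁ as₂ f ts₁ ts₂ (s.subst ρ) ::ₘ (Δl + Δr.map (Atom.subst ρ))⟩,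
   π.and (π.subst ρ))


namespace Termination

variable {S : Sig}

/-! ### Term measures -/

/-- Number of complex subterm occurrences in a term. -/
def ccount : Term S → Nat
  | .var _ => 0
  | .app _ ts => (ts.attach.map fun t => ccount t.1).sum + 1
  decreasing_by simp_wf; have := List.sizeOf_lt_of_mem t.2; omega

/-- Number of proper complex subterm occurrences. -/
def icount : Term S → Nat
  | .var _ => 0
  | .app _ ts => (ts.map ccount).sum

@[simp] lemma ccount_var (x : Nat) : ccount (Term.var x : Term S) = 0 := by
  simp [ccount]

@[simp] lemma ccount_app (f : S.Func) (ts : List (Term S)) :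
    ccount (Term.app f ts) = (ts.map ccount).sum + 1 := by
  rw [ccount]; simp

@[simp] lemma icount_var (x : Nat) : icount (Term.var x : Term S) = 0 := rfl

@[simp] lemma icount_app (f : S.Func) (ts : List (Term S)) :
    icount (Term.app f ts) = (ts.map ccount).sum := rfl

lemma ccount_of_complex {t : Term S} (h : t.IsComplex) : ccount t = icount t + 1 := by
  cases t with
  | var x => exact absurd h (by simp [Term.IsComplex])
  | app f ts => simp

@[simp] lemma varList_var (x : Nat) : (Term.var x : Term S).varList = [x] := by
  simp [Term.varList]

@[simp] lemma varList_app (f : S.Func) (ts : List (Term S)) :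
    (Term.app f ts).varList = (ts.map Term.varList).flatten := by
  rw [Term.varList]; simp

end Termination

namespace Termination2
open SDCPaper SDCPaper.Termination
variable {S : Sig}

/-! ### Multiset helpers -/

lemma mem_msum {m : Multiset (Multiset ℕ)} {a : ℕ} :
    a ∈ m.sum ↔ ∃ s ∈ m, a ∈ s := by
  induction m using Multiset.induction with
  | empty => simp
  | cons b s ih => simp [ih]

lemma toFinset_card_lt_of_two {m : Multiset ℕ} {a : ℕ} (h : 2 ≤ m.count a) :
    m.toFinset.card < m.card := by
  have h2 : Multiset.replicate 2 a ≤ m := by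
    rw [Multiset.le_iff_count]
    intro b
    rcases eq_or_ne b a with rfl | hb
    · simpa using h
    · simp [Multiset.count_replicate, hb]
  obtain ⟨k, rfl⟩ := Multiset.le_iff_exists_add.mp h2
  have : (Multiset.replicate 2 a + k).toFinset = insert a k.toFinset := by
    ext b; simp [Multiset.mem_replicate]
  rw [this]
  have h1 : (insert a k.toFinset).card ≤ k.toFinset.card + 1 := Finset.card_insert_le _ _
  have h3 : k.toFinset.card ≤ Multiset.card k := Multiset.toFinset_card_le k
  rw [Multiset.card_add, Multiset.card_replicate]
  omega

lemma add_swap_of {x x' : ℕ} {u v : Multiset ℕ} (h : u + {x} = v + {x'}) (A B : Multiset ℕ) :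
    (A + (u + B)) + {x} = (A + (v + B)) + {x'} := by
  have h2 : u + B + {x} = v + B + {x'} := by
    rw [add_right_comm, h, add_right_comm]
  rw [add_assoc A (u + B) {x}, add_assoc A (v + B) {x'}, h2]

/-! ### ReplOne lemmas -/

lemma replOne_counts {x x' : Nat} {t t' : Term S} (h : ReplOne x x' t t') :
    ccount t' = ccount t ∧ icount t' = icount t := by
  induction h with
  | var => simp
  | app f ts₁ ts₂ u u' hu ih => simp [ih.1]

lemma replOne_varList {x x' : Nat} {t t' : Term S} (h : ReplOne x x' t t') :
    (t'.varList : Multiset ℕ) + {x} = (t.varList : Multiset ℕ) + {x'} := by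
  induction h with
  | var =>
      simp only [varList_var, Multiset.coe_singleton]
      rw [add_comm]
  | app f ts₁ ts₂ u u' hu ih =>
      simp only [varList_app, List.map_append, List.map_cons, List.flatten_append,
        List.flatten_cons]
      rw [← Multiset.coe_add, ← Multiset.coe_add, ← Multiset.coe_add, ← Multiset.coe_add]
      exact add_swap_of ih _ _

lemma replOne_mem {x x' : Nat} {t t' : Term S} (h : ReplOne x x' t t') :
    x ∈ t.varList := by
  induction h with
  | var => simp
  | app f ts₁ ts₂ u u' hu ih => simp; exact Or.inr (Or.inl ih)

end Termination2

namespace Termination3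
open SDCPaper SDCPaper.Termination Termination2
variable {S : Sig}

/-! ### Clause measures -/

/-- Weight of an atom: proper complex subterm occurrences in its arguments. -/
def atomW (A : Atom S) : ℕ := (A.args.map icount).sum

/-- Shallow measure of a constrained clause. -/
def w2 (c : CClause S) : ℕ := (c.1.succ.map atomW).sum

/-- The multiset of variable occurrences in the succedent. -/
def avars (A : Atom S) : Multiset ℕ := (A.varList : Multiset ℕ)

def svars (c : CClause S) : Multiset ℕ := (c.1.succ.map avars).sum

/-- Linearity measure of a constrained clause. -/
def w3 (c : CClause S) : ℕ := Multiset.card (svars c) - (svars c).toFinset.card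

lemma mem_svars {a : ℕ} {c : CClause S} :
    a ∈ svars c ↔ ∃ A ∈ c.1.succ, a ∈ A.varList := by
  rw [svars, mem_msum]
  constructor
  · rintro ⟨s, hs, ha⟩
    obtain ⟨A, hA, rfl⟩ := Multiset.mem_map.mp hs
    exact ⟨A, hA, by simpa [avars] using ha⟩
  · rintro ⟨A, hA, ha⟩
    exact ⟨avars A, Multiset.mem_map_of_mem _ hA, by simpa [avars] using ha⟩

@[simp] lemma subst_pred (σ : Subst S) (A : Atom S) : (A.subst σ).pred = A.pred := rfl

@[simp] lemma subst_monadic (σ : Subst S) (A : Atom S) :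
    (A.subst σ).Monadic ↔ A.Monadic := by
  simp [Atom.subst, Atom.Monadic]

/-! ### Sums over finite sets of clauses -/

open Classical in
noncomputable def ssum (w : CClause S → ℕ) (N : Set (CClause S)) : ℕ :=
  if h : N.Finite then h.toFinset.sum w else 0

lemma ssum_insert {w : CClause S → ℕ} {M : Set (CClause S)} (hM : M.Finite)
    {s : CClause S} (hs : s ∉ M) : ssum w (insert s M) = w s + ssum w M := by
  classical
  rw [ssum, ssum, dif_pos (hM.insert s), dif_pos hM]
  rw [show (hM.insert s).toFinset = insert s hM.toFinset from by ext; simp]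
  rw [Finset.sum_insert (by simpa using hs)]

lemma ssum_insert_le {w : CClause S → ℕ} {M : Set (CClause S)} (hM : M.Finite)
    (s : CClause S) : ssum w (insert s M) ≤ w s + ssum w M := by
  by_cases hs : s ∈ M
  · rw [Set.insert_eq_of_mem hs]; omega
  · rw [ssum_insert hM hs]

/-! ### Predicates with a non-monadic occurrence -/

def badPreds (N : Set (CClause S)) : Set S.Pred :=
  {P | ∃ c ∈ N, ∃ A ∈ c.1.ante + c.1.succ, A.pred = P ∧ ¬ A.Monadic}

lemma badPreds_finite {N : Set (CClause S)} (h : N.Finite) : (badPreds N).Finite := by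
  have hsub : badPreds N ⊆ ⋃ c ∈ N, Atom.pred '' {A | A ∈ c.1.ante + c.1.succ} := by
    rintro P ⟨c, hc, A, hA, rfl, _⟩
    exact Set.mem_biUnion hc ⟨A, hA, rfl⟩
  exact (Set.Finite.biUnion h fun c _ =>
    ((c.1.ante + c.1.succ).finite_toSet.image _)).subset hsub

end Termination3

namespace Termination4
open SDCPaper SDCPaper.Termination Termination2 Termination3
variable {S : Sig}

lemma mo_decreases {P T : S.Pred} {fP : S.Func} {N N' : Set (CClause S)}
    (hN : N.Finite) (h : MonadicStep P T fP N N') :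
    (badPreds N').ncard < (badPreds N).ncard := by
  obtain ⟨hPT, ⟨c0, hc0, A0, hA0, hA0P, hA0m⟩, hTN, hfN, rfl⟩ := h
  have hsub : badPreds (projCC P T fP '' N) ⊆ badPreds N \ {P} := by
    rintro Q ⟨c', ⟨c, hc, rfl⟩, A', hA', rfl, hm⟩
    have : ∃ A, (A ∈ c.1.ante + c.1.succ) ∧ A' = projAtom P T fP A := by
      rcases Multiset.mem_add.mp hA' with h1 | h1
      · obtain ⟨A, hA, rfl⟩ := Multiset.mem_map.mp h1
        exact ⟨A, Multiset.mem_add.mpr (Or.inl hA), rfl⟩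
      · obtain ⟨A, hA, rfl⟩ := Multiset.mem_map.mp h1
        exact ⟨A, Multiset.mem_add.mpr (Or.inr hA), rfl⟩
    obtain ⟨A, hA, rfl⟩ := this
    by_cases hp : A.pred = P
    · exfalso
      apply hm
      simp [projAtom, hp, Atom.Monadic]
    · rw [show projAtom P T fP A = A from by simp [projAtom, hp]] at hm ⊢
      exact ⟨⟨c, hc, A, hA, rfl, hm⟩, hp⟩
  have hP : P ∈ badPreds N := ⟨c0, hc0, A0, hA0, hA0P, hA0m⟩
  have hss : badPreds (projCC P T fP '' N) ⊂ badPreds N := by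
    refine ⟨hsub.trans Set.diff_subset, fun hle => ?_⟩
    exact (hsub (hle hP)).2 rfl
  exact Set.ncard_lt_ncard hss (badPreds_finite hN)

end Termination4

namespace Termination5
open SDCPaper SDCPaper.Termination Termination2 Termination3
variable {S : Sig}

lemma sh_badPreds {M : Set (CClause S)} {Γ Δ Γl Γr Δl Δr : Multiset (Atom S)}
    {π : Constr S} {Pr : S.Pred} {as₁ as₂ ts₁ ts₂ : List (Term S)} {f : S.Func}
    {s : Term S} {Sp : S.Pred} {x : Nat}
    (hΓ : Γl.map (Atom.subst (single x s)) + Γr = Γ) (hΔ : Δl + Δr = Δ) :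
    badPreds (insert (shLeft Γl Δl π Pr as₁ as₂ ts₁ ts₂ f Sp x)
        (insert (shRight Γr Δr π s Sp) M)) ⊆
      badPreds (insert (shSrc Γ Δ π Pr as₁ as₂ ts₁ ts₂ f s) M) := by
  rintro Q ⟨c', hc', A', hA', rfl, hm⟩
  rcases hc' with rfl | hc'
  · -- shLeft
    have hA'' : A' ∈ ((⟨Sp, [Term.var x]⟩ : Atom S) ::ₘ Γl) +
        (shEAtom Pr as₁ as₂ f ts₁ ts₂ (Term.var x) ::ₘ Δl) := hA'
    rcases Multiset.mem_add.mp hA'' with h1 | h1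
    · rcases Multiset.mem_cons.mp h1 with rfl | h1
      · exact absurd (by simp [Atom.Monadic]) hm
      · refine ⟨shSrc Γ Δ π Pr as₁ as₂ ts₁ ts₂ f s, Or.inl rfl,
          A'.subst (single x s), ?_, rfl, by simpa using hm⟩
        refine Multiset.mem_add.mpr (Or.inl ?_)
        show A'.subst (single x s) ∈ Γ
        rw [← hΓ]
        exact Multiset.mem_add.mpr (Or.inl (Multiset.mem_map_of_mem _ h1))
    · rcases Multiset.mem_cons.mp h1 with rfl | h1
      · refine ⟨shSrc Γ Δ π Pr as₁ as₂ ts₁ ts₂ f s, Or.inl rfl,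
          shEAtom Pr as₁ as₂ f ts₁ ts₂ s, ?_, rfl, ?_⟩
        · exact Multiset.mem_add.mpr (Or.inr (Multiset.mem_cons_self _ _))
        · intro hmon
          exact hm (by simpa [shEAtom, Atom.Monadic] using hmon)
      · refine ⟨shSrc Γ Δ π Pr as₁ as₂ ts₁ ts₂ f s, Or.inl rfl, A', ?_, rfl, hm⟩
        refine Multiset.mem_add.mpr (Or.inr (Multiset.mem_cons_of_mem ?_))
        rw [← hΔ]; exact Multiset.mem_add.mpr (Or.inl h1)
  rcases hc' with rfl | hc'
  · -- shRight
    have hA'' : A' ∈ Γr + ((⟨Sp, [s]⟩ : Atom S) ::ₘ Δr) := hA'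
    rcases Multiset.mem_add.mp hA'' with h1 | h1
    · refine ⟨shSrc Γ Δ π Pr as₁ as₂ ts₁ ts₂ f s, Or.inl rfl, A', ?_, rfl, hm⟩
      refine Multiset.mem_add.mpr (Or.inl ?_)
      show A' ∈ Γ
      rw [← hΓ]; exact Multiset.mem_add.mpr (Or.inr h1)
    · rcases Multiset.mem_cons.mp h1 with rfl | h1
      · exact absurd (by simp [Atom.Monadic]) hm
      · refine ⟨shSrc Γ Δ π Pr as₁ as₂ ts₁ ts₂ f s, Or.inl rfl, A', ?_, rfl, hm⟩
        refine Multiset.mem_add.mpr (Or.inr (Multiset.mem_cons_of_mem ?_))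
        rw [← hΔ]; exact Multiset.mem_add.mpr (Or.inr h1)
  · exact ⟨c', Or.inr hc', A', hA', rfl, hm⟩

lemma sh_w2 {Γl Γr Δl Δr Δ : Multiset (Atom S)} {π : Constr S} {Pr : S.Pred}
    {as₁ as₂ ts₁ ts₂ : List (Term S)} {f : S.Func} {s : Term S} {Sp : S.Pred}
    {x : Nat} {Γ : Multiset (Atom S)}
    (hΔ : Δl + Δr = Δ) (hs : s.IsComplex) :
    w2 (shLeft Γl Δl π Pr as₁ as₂ ts₁ ts₂ f Sp x) + w2 (shRight Γr Δr π s Sp) + 1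
      = w2 (shSrc Γ Δ π Pr as₁ as₂ ts₁ ts₂ f s) := by
  have hΔ2 : (Δl.map atomW).sum + (Δr.map atomW).sum = (Δ.map atomW).sum := by
    rw [← hΔ, Multiset.map_add, Multiset.sum_add]
  have hcc : ccount s = icount s + 1 := ccount_of_complex hs
  simp only [w2, shLeft, shRight, shSrc, Multiset.map_cons, Multiset.sum_cons]
  simp only [atomW, shEAtom, shETerm, List.map_append, List.map_cons, List.sum_append,
    List.sum_cons, icount_app, List.map_append, List.map_cons, List.sum_append,
    List.sum_cons, ccount_var, List.map_nil, List.sum_nil]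
  omega

end Termination5

namespace Termination6
open SDCPaper SDCPaper.Termination Termination2 Termination3
variable {S : Sig}

lemma replOneAtom_facts {x x' : Nat} {E E' : Atom S} (h : ReplOneAtom x x' E E') :
    avars E' + {x} = avars E + {x'} ∧ x ∈ E.varList ∧ E'.pred = E.pred ∧
      (E'.Monadic ↔ E.Monadic) ∧ atomW E' = atomW E := by
  obtain ⟨P, as₁, as₂, t, t', rfl, rfl, hr⟩ := h
  refine ⟨?_, ?_, rfl, by simp [Atom.Monadic], ?_⟩
  · simp only [avars, Atom.varList, List.map_append, List.map_cons,
      List.flatten_append, List.flatten_cons]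
    rw [← Multiset.coe_add, ← Multiset.coe_add, ← Multiset.coe_add, ← Multiset.coe_add]
    exact add_swap_of (replOne_varList hr) _ _
  · simp only [Atom.varList, List.map_append, List.map_cons, List.flatten_append,
      List.flatten_cons, List.mem_append, List.mem_cons]
    exact Or.inr (Or.inl (replOne_mem hr))
  · simp [atomW, (replOne_counts hr).2]

lemma svars_hasVar {c : CClause S} {a : ℕ} (h : a ∈ svars c) : c.HasVar a := by
  obtain ⟨A, hA, ha⟩ := mem_svars.mp h
  exact Or.inr (Or.inl ⟨A, hA, ha⟩)

lemma li_badPreds {M : Set (CClause S)} {Γ Δ : Multiset (Atom S)} {π : Constr S}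
    {E E' : Atom S} {x x' : Nat} (hrep : ReplOneAtom x x' E E') :
    badPreds (insert (liRes Γ Δ π E' x x') M) ⊆ badPreds (insert (liSrc Γ Δ π E) M) := by
  obtain ⟨-, -, hpred, hmon, -⟩ := replOneAtom_facts hrep
  rintro Q ⟨c', hc', A', hA', rfl, hm⟩
  rcases hc' with rfl | hc'
  · have hA'' : A' ∈ (Γ.map (Atom.subst (single x (Term.var x'))) + Γ) + (E' ::ₘ Δ) := hA'
    rcases Multiset.mem_add.mp hA'' with h1 | h1
    · rcases Multiset.mem_add.mp h1 with h2 | h2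
      · obtain ⟨A, hA, rfl⟩ := Multiset.mem_map.mp h2
        exact ⟨liSrc Γ Δ π E, Or.inl rfl, A,
          Multiset.mem_add.mpr (Or.inl hA), rfl, by simpa using hm⟩
      · exact ⟨liSrc Γ Δ π E, Or.inl rfl, A', Multiset.mem_add.mpr (Or.inl h2), rfl, hm⟩
    · rcases Multiset.mem_cons.mp h1 with rfl | h1
      · refine ⟨liSrc Γ Δ π E, Or.inl rfl, E,
          Multiset.mem_add.mpr (Or.inr (Multiset.mem_cons_self _ _)), hpred.symm ▸ rfl, ?_⟩
        exact fun hE => hm (hmon.mpr hE)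
      · exact ⟨liSrc Γ Δ π E, Or.inl rfl, A',
          Multiset.mem_add.mpr (Or.inr (Multiset.mem_cons_of_mem h1)), rfl, hm⟩
  · exact ⟨c', Or.inr hc', A', hA', rfl, hm⟩

lemma li_w2 {Γ Δ : Multiset (Atom S)} {π : Constr S} {E E' : Atom S} {x x' : Nat}
    (hrep : ReplOneAtom x x' E E') :
    w2 (liRes Γ Δ π E' x x') = w2 (liSrc Γ Δ π E) := by
  obtain ⟨-, -, -, -, hW⟩ := replOneAtom_facts hrep
  simp [w2, liRes, liSrc, hW]

lemma li_w3 {Γ Δ : Multiset (Atom S)} {π : Constr S} {E E' : Atom S} {x x' : Nat}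
    (hc : LinearCond Γ Δ π E E' x x') :
    w3 (liRes Γ Δ π E' x x') < w3 (liSrc Γ Δ π E) := by
  obtain ⟨hrep, hfresh, hkeep⟩ := hc
  obtain ⟨heq, hxE, -, -, -⟩ := replOneAtom_facts hrep
  set m := svars (liSrc Γ Δ π E) with hmdef
  set m' := svars (liRes Γ Δ π E' x x') with hm'def
  have hm : m = avars E + (Δ.map avars).sum := by
    simp [hmdef, svars, liSrc]
  have hm' : m' = avars E' + (Δ.map avars).sum := by
    simp [hm'def, svars, liRes]
  have hEq : m' + {x} = m + {x'} := by
    rw [hm', hm, add_right_comm, heq, add_right_comm]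
  have hxm : x ∈ m := by
    rw [hm]
    exact Multiset.mem_add.mpr (Or.inl (by simpa [avars] using hxE))
  have hxx' : x ≠ x' := by
    rintro rfl
    exact hfresh (svars_hasVar hxm)
  have hx'm : x' ∉ m := fun h => hfresh (svars_hasVar h)
  have hxm' : x ∈ m' := by
    apply mem_svars.mpr
    rcases hkeep with h | ⟨A, hA, ha⟩
    · exact ⟨E', Multiset.mem_cons_self _ _, h⟩
    · exact ⟨A, Multiset.mem_cons_of_mem hA, ha⟩
  have hcx := congrArg (Multiset.count x) hEq
  have hcx' := congrArg (Multiset.count x') hEq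
  simp [Multiset.count_singleton, hxx', Ne.symm hxx'] at hcx hcx'
  have hcardEq : Multiset.card m' = Multiset.card m := by
    have := congrArg Multiset.card hEq
    simpa using this
  have hx'm' : x' ∈ m' := by
    rw [← Multiset.count_pos]
    omega
  have hcount2 : 2 ≤ m.count x := by
    have h1 : 1 ≤ m'.count x := Multiset.count_pos.mpr hxm'
    omega
  have htf : m'.toFinset = insert x' m.toFinset := by
    ext a
    simp only [Multiset.mem_toFinset, Finset.mem_insert]
    constructor
    · intro ha
      have : a ∈ m + {x'} := by
        rw [← hEq]; exact Multiset.mem_add.mpr (Or.inl ha)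
      rcases Multiset.mem_add.mp this with h | h
      · exact Or.inr h
      · exact Or.inl (by simpa using h)
    · rintro (rfl | ha)
      · exact hx'm'
      · have : a ∈ m' + {x} := by
          rw [hEq]; exact Multiset.mem_add.mpr (Or.inl ha)
        rcases Multiset.mem_add.mp this with h | h
        · exact h
        · have : a = x := by simpa using h
          exact this ▸ hxm'
  have htfcard : m'.toFinset.card = m.toFinset.card + 1 := by
    rw [htf, Finset.card_insert_of_notMem (by simpa [Multiset.mem_toFinset] using hx'm)]
  have hlt : m.toFinset.card < Multiset.card m := toFinset_card_lt_of_two hcount2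
  show Multiset.card m' - m'.toFinset.card < Multiset.card m - m.toFinset.card
  omega

end Termination6

namespace Termination7
open SDCPaper SDCPaper.Termination Termination2 Termination3 Termination4 Termination5 Termination6
variable {S : Sig}

lemma no_descent {α : Sort*} {r : α → α → Prop} (wf : WellFounded r) (g : ℕ → α)
    (h : ∀ k, r (g (k + 1)) (g k)) : False :=
  have H : ∀ a k, g k ≠ a := fun a =>
    wf.induction (C := fun a => ∀ k, g k ≠ a) a
      (fun b ih k hk => ih (g (k + 1)) (hk ▸ h k) (k + 1) rfl)
  H (g 0) 0 rfl

lemma step_finite {N N' : Set (CClause S)} {dd : StepData S}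
    (hN : N.Finite) (hD : DStep N dd N') : N'.Finite := by
  cases hD with
  | mo N N' P T fP h =>
      obtain ⟨-, -, -, -, rfl⟩ := h
      exact hN.image _
  | sh M Γ Δ Γl Γr Δl Δr π Pr as₁ as₂ ts₁ ts₂ f s Sp x h1 h2 =>
      exact ((hN.subset (Set.subset_insert _ _)).insert _).insert _
  | li M Γ Δ π E E' x x' h1 h2 =>
      exact (hN.subset (Set.subset_insert _ _)).insert _
  | ref M c x t h1 h2 =>
      exact ((hN.subset (Set.subset_insert _ _)).insert _).insert _

lemma step_decreases {N N' : Set (CClause S)} {dd : StepData S}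
    (hN : N.Finite) (hD : DStep N dd N') (hr : dd.rule ≠ 0) :
    Prod.Lex (α := ℕ) (β := ℕ × ℕ) (· < ·) (Prod.Lex (· < ·) (· < ·))
      ((badPreds N').ncard, ssum w2 N', ssum w3 N')
      ((badPreds N).ncard, ssum w2 N, ssum w3 N) := by
  cases hD with
  | mo N N' P T fP h =>
      exact Prod.Lex.left _ _ (mo_decreases hN h)
  | sh M Γ Δ Γl Γr Δl Δr π Pr as₁ as₂ ts₁ ts₂ f s Sp x h1 h2 =>
      obtain ⟨hs, hSp, hx, hΓ, hΔ, h6, h7⟩ := h2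
      have hM : M.Finite := hN.subset (Set.subset_insert _ _)
      have ha : (badPreds (insert (shLeft Γl Δl π Pr as₁ as₂ ts₁ ts₂ f Sp x)
            (insert (shRight Γr Δr π s Sp) M))).ncard ≤
          (badPreds (insert (shSrc Γ Δ π Pr as₁ as₂ ts₁ ts₂ f s) M)).ncard :=
        Set.ncard_le_ncard (sh_badPreds hΓ hΔ) (badPreds_finite hN)
      have hb : ssum w2 (insert (shLeft Γl Δl π Pr as₁ as₂ ts₁ ts₂ f Sp x)
            (insert (shRight Γr Δr π s Sp) M)) <
          ssum w2 (insert (shSrc Γ Δ π Pr as₁ as₂ ts₁ ts₂ f s) M) := by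
        have e1 := ssum_insert_le (w := w2) (hM.insert (shRight Γr Δr π s Sp))
          (shLeft Γl Δl π Pr as₁ as₂ ts₁ ts₂ f Sp x)
        have e2 := ssum_insert_le (w := w2) hM (shRight Γr Δr π s Sp)
        have e3 := ssum_insert (w := w2) hM h1
        have e4 := sh_w2 (Γl := Γl) (Γr := Γr) (Γ := Γ) (π := π) (Pr := Pr) (as₁ := as₁) (as₂ := as₂) (ts₁ := ts₁) (ts₂ := ts₂) (f := f) (Sp := Sp) (x := x) hΔ hs
        omega
      rcases lt_or_eq_of_le ha with h | h
      · exact Prod.Lex.left _ _ h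
      · rw [h]
        exact Prod.Lex.right _ (Prod.Lex.left _ _ hb)
  | li M Γ Δ π E E' x x' h1 h2 =>
      have hM : M.Finite := hN.subset (Set.subset_insert _ _)
      have ha : (badPreds (insert (liRes Γ Δ π E' x x') M)).ncard ≤
          (badPreds (insert (liSrc Γ Δ π E) M)).ncard :=
        Set.ncard_le_ncard (li_badPreds h2.1) (badPreds_finite hN)
      have hb : ssum w2 (insert (liRes Γ Δ π E' x x') M) ≤
          ssum w2 (insert (liSrc Γ Δ π E) M) := by
        have e1 := ssum_insert_le (w := w2) hM (liRes Γ Δ π E' x x')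
        have e3 := ssum_insert (w := w2) hM h1
        have e4 := li_w2 (Γ := Γ) (Δ := Δ) (π := π) h2.1
        omega
      have hc : ssum w3 (insert (liRes Γ Δ π E' x x') M) <
          ssum w3 (insert (liSrc Γ Δ π E) M) := by
        have e1 := ssum_insert_le (w := w3) hM (liRes Γ Δ π E' x x')
        have e3 := ssum_insert (w := w3) hM h1
        have e4 := li_w3 h2
        omega
      rcases lt_or_eq_of_le ha with h | h
      · exact Prod.Lex.left _ _ h
      · rw [h]
        rcases lt_or_eq_of_le hb with h' | h'
        · exact Prod.Lex.right _ (Prod.Lex.left _ _ h')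
        · rw [h']
          exact Prod.Lex.right _ (Prod.Lex.right _ hc)
  | ref M c x t h1 h2 =>
      exact absurd rfl hr

end Termination7

/-- **Termination of the approximation rewrite system.**
The priority rewrite system `⇒_AP` consisting of the Refinement, Monadic,
Shallow, and Linear transformations (with priority
Refinement > Monadic > Shallow > Linear, and Refinement applied only finitely
often) terminates: there is no infinite sequence
`N₀ ⇒_AP N₁ ⇒_AP N₂ ⇒_AP ⋯` (starting from a finite clause set). -/
theorem apr_terminates
    (f : ℕ → Set (CClause S)) (d : ℕ → StepData S)
    (h0 : (f 0).Finite)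
    (hstep : ∀ n, APStepPrio (f n) (d n) (f (n + 1)))
    (href : {n | (d n).rule = 0}.Finite) :
    False := by
  classical
  have hfin : ∀ n, (f n).Finite := by
    intro n
    induction n with
    | zero => exact h0
    | succ n ih => exact Termination7.step_finite ih (hstep n).1
  obtain ⟨B, hB⟩ := href.bddAbove
  have hrule : ∀ k, (d (B + 1 + k)).rule ≠ 0 := by
    intro k hk
    have : B + 1 + k ≤ B := hB hk
    omega
  have wf3 : WellFounded (Prod.Lex (α := ℕ) (β := ℕ × ℕ) (· < ·) (Prod.Lex (· < ·) (· < ·))) :=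
    WellFounded.prod_lex wellFounded_lt (WellFounded.prod_lex wellFounded_lt wellFounded_lt)
  exact Termination7.no_descent wf3
    (fun k => ((Termination3.badPreds (f (B + 1 + k))).ncard,
      Termination3.ssum Termination3.w2 (f (B + 1 + k)),
      Termination3.ssum Termination3.w3 (f (B + 1 + k))))
    (fun k => Termination7.step_decreases (hfin _) (hstep (B + 1 + k)).1 (hrule k))


end SDCPaper
end

section
/- The approximation is an over-approximation: if N ⇒_AP N' by a single step of the Refinement, Monadic, Shallow, or Linear transformation and N' is satisfiable, then N is satisfiable. -/
/- Common formalization of first-order clauses with straight dismatching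
   constraints (SDC), following Teucke & Weidenbach,
   "Decidability of the Monadic Shallow Linear First-Order Fragment with
   Straight Dismatching Constraints". -/

set_option linter.unusedVariables false

namespace SDCPaper

variable {S : Sig}

section Aux
variable {S : Sig}

theorem term_ind {P : Term S → Prop}
    (hv : ∀ x, P (.var x))
    (ha : ∀ f ts, (∀ t ∈ ts, P t) → P (.app f ts)) : ∀ t, P t
  | .var x => hv x
  | .app f ts => ha f ts fun t ht => term_ind hv ha t
termination_by t => sizeOf t
decreasing_by simp_wf; have := List.sizeOf_lt_of_mem ht; omega

@[simp] theorem subst_var (σ : Subst S) (x : Nat) : (Term.var x).subst σ = σ x := by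
  rw [Term.subst]

@[simp] theorem subst_app (σ : Subst S) (f : S.Func) (ts : List (Term S)) :
    (Term.app f ts).subst σ = .app f (ts.map (Term.subst σ)) := by
  rw [Term.subst]
  congr 1
  simp [List.attach_map_val]

@[simp] theorem varList_var (x : Nat) : (Term.var x : Term S).varList = [x] := by
  rw [Term.varList]

@[simp] theorem varList_app (f : S.Func) (ts : List (Term S)) :
    (Term.app f ts).varList = (ts.map Term.varList).flatten := by
  rw [Term.varList]
  congr 1
  simp [List.attach_map_val]

end Aux
section Aux2
variable {S : Sig}

theorem subst_congr : ∀ (t : Term S) (σ τ : Subst S),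
    (∀ y ∈ t.varList, σ y = τ y) → t.subst σ = t.subst τ := by
  intro t
  induction t using term_ind with
  | hv x => intro σ τ h; simp; exact h x (by simp)
  | ha f ts ih =>
      intro σ τ h
      simp only [subst_app, Term.app.injEq, true_and]
      apply List.map_congr_left
      intro t ht
      exact ih t ht σ τ fun y hy => h y (by simp [List.mem_flatten]; exact ⟨t, ht, hy⟩)

theorem subst_subst : ∀ (t : Term S) (σ τ : Subst S),
    (t.subst σ).subst τ = t.subst (fun y => (σ y).subst τ) := by
  intro t
  induction t using term_ind with
  | hv x => intro σ τ; simp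
  | ha f ts ih =>
      intro σ τ
      simp only [subst_app, List.map_map, Term.app.injEq, true_and]
      apply List.map_congr_left
      intro t ht
      exact ih t ht σ τ

theorem ground_of_subst : ∀ (t : Term S) (σ : Subst S),
    (∀ y ∈ t.varList, (σ y).IsGround) → (t.subst σ).IsGround := by
  intro t
  induction t using term_ind with
  | hv x => intro σ h; simpa using h x (by simp)
  | ha f ts ih =>
      intro σ h
      simp only [Term.IsGround, subst_app, varList_app, List.map_map,
        List.flatten_eq_nil_iff, List.mem_map] at *
      rintro l ⟨t, ht, rfl⟩
      exact ih t ht σ fun y hy => h y (by simp [List.mem_flatten]; exact ⟨t, ht, hy⟩)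

theorem ground_arg_of_subst : ∀ (t : Term S) (σ : Subst S),
    (t.subst σ).IsGround → ∀ y ∈ t.varList, (σ y).IsGround := by
  intro t
  induction t using term_ind with
  | hv x => intro σ h y hy; simp at h hy; subst hy; exact h
  | ha f ts ih =>
      intro σ h y hy
      simp only [Term.IsGround, subst_app, varList_app, List.map_map,
        List.flatten_eq_nil_iff, List.mem_map] at h
      simp only [varList_app, List.mem_flatten, List.mem_map] at hy
      obtain ⟨l, ⟨t, ht, rfl⟩, hy⟩ := hy
      exact ih t ht σ (h _ ⟨t, ht, rfl⟩) y hy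

end Aux2
section Aux3
variable {S : Sig}

theorem mem_atom_varList {y : Nat} {A : Atom S} :
    y ∈ A.varList ↔ ∃ t ∈ A.args, y ∈ t.varList := by
  simp [Atom.varList, List.mem_flatten]

theorem atom_subst_congr {A : Atom S} {σ τ : Subst S}
    (h : ∀ y ∈ A.varList, σ y = τ y) : A.subst σ = A.subst τ := by
  unfold Atom.subst
  congr 1
  apply List.map_congr_left
  intro t ht
  exact subst_congr t σ τ fun y hy => h y (mem_atom_varList.mpr ⟨t, ht, hy⟩)

theorem atom_subst_subst (A : Atom S) (σ τ : Subst S) :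
    (A.subst σ).subst τ = A.subst (fun y => (σ y).subst τ) := by
  unfold Atom.subst
  simp only [List.map_map]
  congr 1
  apply List.map_congr_left
  intro t ht
  exact subst_subst t σ τ

@[simp] theorem atom_subst_pred (A : Atom S) (σ : Subst S) :
    (A.subst σ).pred = A.pred := rfl

@[simp] theorem clause_subst_ante (C : Clause S) (σ : Subst S) :
    (C.subst σ).ante = C.ante.map (Atom.subst σ) := rfl

@[simp] theorem clause_subst_succ (C : Clause S) (σ : Subst S) :
    (C.subst σ).succ = C.succ.map (Atom.subst σ) := rfl

/-- `Solves` only depends on values of the substitution at constraint variables. -/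
theorem solves_congr {π : Constr S} {δ δ' : Subst S}
    (hg : IsGroundSubst δ') (hagree : ∀ y, π.HasVar y → δ' y = δ y)
    (h : Solves δ π) : Solves δ' π := by
  cases π with
  | bot => exact h
  | conj cs =>
      obtain ⟨_, h⟩ := h
      refine ⟨hg, fun c hc => ?_⟩
      have : c.1.subst δ' = c.1.subst δ := by
        apply subst_congr
        intro y hy
        exact hagree y ⟨c, hc, Or.inl hy⟩
      rw [this]; exact h c hc

theorem solves_subst_of {π : Constr S} {δ δ' : Subst S} {σ : Subst S}
    (hg : IsGroundSubst δ')
    (hagree : ∀ y, π.HasVar y → (σ y).subst δ' = δ y)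
    (h : Solves δ π) : Solves δ' (π.subst σ) := by
  cases π with
  | bot => exact h
  | conj cs =>
      obtain ⟨_, h⟩ := h
      refine ⟨hg, ?_⟩
      rintro c hc
      simp only [Constr.subst, List.mem_map] at hc
      obtain ⟨c0, hc0, rfl⟩ := hc
      have : (c0.1.subst σ).subst δ' = c0.1.subst δ := by
        rw [subst_subst]
        apply subst_congr
        intro y hy
        exact hagree y ⟨c0, hc0, Or.inl hy⟩
      simpa [this] using h c0 hc0

theorem solves_and {δ : Subst S} {π ρ : Constr S} :
    Solves δ (π.and ρ) ↔ Solves δ π ∧ Solves δ ρ := by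
  cases π with
  | bot => simp [Constr.and, Solves]
  | conj a =>
      cases ρ with
      | bot => simp [Constr.and, Solves]
      | conj b =>
          simp only [Constr.and, Solves, List.mem_append]
          constructor
          · rintro ⟨hg, h⟩
            exact ⟨⟨hg, fun c hc => h c (Or.inl hc)⟩, ⟨hg, fun c hc => h c (Or.inr hc)⟩⟩
          · rintro ⟨⟨hg, h1⟩, ⟨_, h2⟩⟩
            exact ⟨hg, fun c hc => hc.elim (h1 c) (h2 c)⟩

theorem replone_subst : ∀ {t t' : Term S}, ReplOne x x' t t' → ∀ (σ : Subst S),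
    σ x' = σ x → t'.subst σ = t.subst σ := by
  intro t t' h
  induction h with
  | var => intro σ hσ; simp [hσ]
  | app f ts₁ ts₂ t t' h ih =>
      intro σ hσ
      simp [ih σ hσ]

theorem replone_var_mem : ∀ {t t' : Term S}, ReplOne x x' t t' → x ∈ t.varList := by
  intro t t' h
  induction h with
  | var => simp
  | app f ts₁ ts₂ t t' h ih =>
      simp only [varList_app, List.mem_flatten, List.mem_map]
      exact ⟨t.varList, ⟨t, by simp, rfl⟩, ih⟩

end Aux3
section Aux4
variable {S : Sig}

theorem projAtom_subst (P T : S.Pred) (fP : S.Func) (A : Atom S) (δ : Subst S) :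
    (projAtom P T fP A).subst δ = projAtom P T fP (A.subst δ) := by
  by_cases h : A.pred = P
  · simp [projAtom, h, Atom.subst]
  · simp [projAtom, h, Atom.subst]

theorem solves_ground {δ : Subst S} {π : Constr S} (h : Solves δ π) : IsGroundSubst δ := by
  cases π with
  | bot => exact absurd h (by simp [Solves])
  | conj cs => exact h.1

end Aux4

/-- **The approximation is an over-approximation.**
If `N ⇒_AP N'` by a single step of the Refinement, Monadic, Shallow, or
Linear transformation and `N'` is satisfiable, then `N` is satisfiable. -/
theorem apr_over_approximation
    (N N' : Set (CClause S)) (d : StepData S)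
    (h : DStep N d N') (hsat : Satisfiable N') :
    Satisfiable N := by
  cases h with
  | mo N N' P T fP hmo =>
      obtain ⟨I, hI⟩ := hsat
      obtain ⟨-, -, -, -, rfl⟩ := hmo
      refine ⟨{A | projAtom P T fP A ∈ I}, ?_⟩
      intro c hc D hD
      obtain ⟨δ, hδ, rfl⟩ := hD
      have hproj := hI (projCC P T fP c) ⟨c, hc, rfl⟩ ((projCC P T fP c).1.subst δ)
        ⟨δ, hδ, rfl⟩
      rcases hproj with ⟨A, hA, hAI⟩ | ⟨A, hA, hAI⟩
      · simp only [projCC, projClause, clause_subst_succ, Multiset.map_map, Multiset.mem_map,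
          Function.comp_apply] at hA
        obtain ⟨B, hB, rfl⟩ := hA
        refine Or.inl ⟨B.subst δ, ?_, ?_⟩
        · simp only [clause_subst_succ, Multiset.mem_map]; exact ⟨B, hB, rfl⟩
        · show projAtom P T fP (B.subst δ) ∈ I
          rwa [← projAtom_subst]
      · simp only [projCC, projClause, clause_subst_ante, Multiset.map_map, Multiset.mem_map,
          Function.comp_apply] at hA
        obtain ⟨B, hB, rfl⟩ := hA
        refine Or.inr ⟨B.subst δ, ?_, ?_⟩
        · simp only [clause_subst_ante, Multiset.mem_map]; exact ⟨B, hB, rfl⟩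
        · show ¬ projAtom P T fP (B.subst δ) ∈ I
          rwa [← projAtom_subst]
  | sh M Γ Δ Γl Γr Δl Δr π Pr as₁ as₂ ts₁ ts₂ f s Sp x hnot hc =>
      classical
      obtain ⟨I, hI⟩ := hsat
      obtain ⟨-, -, hx, hΓ, hΔ, -, -⟩ := hc
      refine ⟨I, ?_⟩
      intro c0 hc0
      rcases hc0 with rfl | hc0
      swap
      · exact hI c0 (Set.mem_insert_iff.mpr (Or.inr (Set.mem_insert_iff.mpr (Or.inr hc0))))
      intro D hD
      obtain ⟨δ, hδ, rfl⟩ := hD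
      have hδg : IsGroundSubst δ := solves_ground hδ
      set E : Atom S := shEAtom Pr as₁ as₂ f ts₁ ts₂ s with hEdef
      -- x fresh for Γ, E ::ₘ Δ, π
      have hfreshA : ∀ (A : Atom S), (A ∈ Γ ∨ A ∈ E ::ₘ Δ) → x ∉ A.varList := by
        rintro A hA hxa
        exact hx (hA.elim (fun h => Or.inl ⟨A, h, hxa⟩) (fun h => Or.inr (Or.inl ⟨A, h, hxa⟩)))
      have hfreshπ : ∀ y, π.HasVar y → y ≠ x := by
        rintro y hy rfl
        exact hx (Or.inr (Or.inr hy))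
      -- first use the right clause
      have hR := hI (shRight Γr Δr π s Sp)
        (Set.mem_insert_iff.mpr (Or.inr (Set.mem_insert _ _))) _ ⟨δ, hδ, rfl⟩
      rcases hR with ⟨A, hA, hAI⟩ | ⟨A, hA, hAI⟩
      swap
      · -- negative witness from Γr ⊆ Γ
        simp only [shRight, clause_subst_ante, Multiset.mem_map] at hA
        obtain ⟨B, hB, rfl⟩ := hA
        have hBΓ : B ∈ Γ := by
          rw [← hΓ]; exact Multiset.mem_add.mpr (Or.inr hB)
        refine Or.inr ⟨B.subst δ, ?_, hAI⟩
        simp only [shSrc, clause_subst_ante, Multiset.mem_map]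
        exact ⟨B, hBΓ, rfl⟩
      simp only [shRight, clause_subst_succ, Multiset.map_cons, Multiset.mem_cons,
        Multiset.mem_map] at hA
      rcases hA with rfl | ⟨B, hB, rfl⟩
      swap
      · -- positive witness from Δr ⊆ Δ
        have hBΔ : B ∈ Δ := by
          rw [← hΔ]; exact Multiset.mem_add.mpr (Or.inr hB)
        refine Or.inl ⟨B.subst δ, ?_, hAI⟩
        simp only [shSrc, clause_subst_succ, Multiset.map_cons, Multiset.mem_cons,
          Multiset.mem_map]
        exact Or.inr ⟨B, hBΔ, rfl⟩
      -- S(s)δ ∈ I : now use the left clause with δ' = δ[x ↦ sδ]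
      set δ' : Subst S := fun y => if y = x then s.subst δ else δ y with hδ'def
      have hδ'x : δ' x = s.subst δ := by simp [hδ'def]
      have hδ'ne : ∀ y, y ≠ x → δ' y = δ y := by intro y hy; simp [hδ'def, hy]
      have hδ'g : IsGroundSubst δ' := by
        intro y; by_cases hy : y = x
        · subst hy; rw [hδ'x]; exact ground_of_subst s δ (fun z _ => hδg z)
        · rw [hδ'ne y hy]; exact hδg y
      have hsolves : Solves δ' π :=
        solves_congr hδ'g (fun y hy => hδ'ne y (hfreshπ y hy)) hδ
      have hAcong : ∀ (A : Atom S), (A ∈ Γ ∨ A ∈ E ::ₘ Δ) → A.subst δ' = A.subst δ := by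
        intro A hA
        apply atom_subst_congr
        intro y hy
        exact hδ'ne y (fun h => hfreshA A hA (h ▸ hy))
      have hL := hI (shLeft Γl Δl π Pr as₁ as₂ ts₁ ts₂ f Sp x)
        (Set.mem_insert _ _) _ ⟨δ', hsolves, rfl⟩
      rcases hL with ⟨A, hA, hAI'⟩ | ⟨A, hA, hAI'⟩
      · -- positive: E[x]δ' or Δl
        simp only [shLeft, clause_subst_succ, Multiset.map_cons, Multiset.mem_cons,
          Multiset.mem_map] at hA
        rcases hA with rfl | ⟨B, hB, rfl⟩
        · -- E[x]δ' = E[s]δ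
          have hxE : x ∉ E.varList :=
            hfreshA E (Or.inr (Multiset.mem_cons_self _ _))
          have hfmem : ∀ a ∈ as₁ ++ as₂, a.subst δ' = a.subst δ := by
            intro a ha
            apply subst_congr
            intro y hy
            refine hδ'ne y fun h => hxE ?_
            subst h
            refine mem_atom_varList.mpr ⟨a, ?_, hy⟩
            simp only [hEdef, shEAtom]
            rcases List.mem_append.mp ha with h | h
            · exact List.mem_append.mpr (Or.inl h)
            · exact List.mem_append.mpr (Or.inr (List.mem_cons_of_mem _ h))
          have htmem : ∀ a ∈ ts₁ ++ ts₂, a.subst δ' = a.subst δ := by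
            intro a ha
            apply subst_congr
            intro y hy
            refine hδ'ne y fun h => hxE ?_
            subst h
            refine mem_atom_varList.mpr ⟨shETerm f ts₁ ts₂ s, ?_, ?_⟩
            · simp [hEdef, shEAtom]
            · simp only [shETerm, varList_app, List.mem_flatten, List.mem_map]
              refine ⟨a.varList, ⟨a, ?_, rfl⟩, hy⟩
              rcases List.mem_append.mp ha with h | h
              · exact List.mem_append.mpr (Or.inl h)
              · exact List.mem_append.mpr (Or.inr (List.mem_cons_of_mem _ h))
          have hEeq : (shEAtom Pr as₁ as₂ f ts₁ ts₂ (Term.var x)).subst δ' = E.subst δ := by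
            have h1 : as₁.map (Term.subst δ') = as₁.map (Term.subst δ) :=
              List.map_congr_left fun a ha => hfmem a (List.mem_append.mpr (Or.inl ha))
            have h2 : as₂.map (Term.subst δ') = as₂.map (Term.subst δ) :=
              List.map_congr_left fun a ha => hfmem a (List.mem_append.mpr (Or.inr ha))
            have h3 : ts₁.map (Term.subst δ') = ts₁.map (Term.subst δ) :=
              List.map_congr_left fun a ha => htmem a (List.mem_append.mpr (Or.inl ha))
            have h4 : ts₂.map (Term.subst δ') = ts₂.map (Term.subst δ) :=
              List.map_congr_left fun a ha => htmem a (List.mem_append.mpr (Or.inr ha))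
            simp [hEdef, shEAtom, shETerm, Atom.subst, List.map_append, h1, h2, h3, h4, hδ'x]
          refine Or.inl ⟨E.subst δ, ?_, hEeq ▸ hAI'⟩
          simp only [shSrc, clause_subst_succ, Multiset.map_cons, Multiset.mem_cons]
          exact Or.inl rfl
        · have hBΔ : B ∈ Δ := by rw [← hΔ]; exact Multiset.mem_add.mpr (Or.inl hB)
          have hBeq : B.subst δ' = B.subst δ :=
            hAcong B (Or.inr (Multiset.mem_cons_of_mem hBΔ))
          refine Or.inl ⟨B.subst δ, ?_, hBeq ▸ hAI'⟩
          simp only [shSrc, clause_subst_succ, Multiset.map_cons, Multiset.mem_cons,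
            Multiset.mem_map]
          exact Or.inr ⟨B, hBΔ, rfl⟩
      · -- negative: S(x)δ' or Γl
        simp only [shLeft, clause_subst_ante, Multiset.map_cons, Multiset.mem_cons,
          Multiset.mem_map] at hA
        rcases hA with rfl | ⟨B, hB, rfl⟩
        · -- S(x)δ' = S(sδ) ∈ I : contradiction
          exfalso
          apply hAI'
          have : (⟨Sp, [Term.var x]⟩ : Atom S).subst δ' = (⟨Sp, [s]⟩ : Atom S).subst δ := by
            simp [Atom.subst, hδ'x]
          rw [this]
          exact hAI
        · -- B ∈ Γl :  B{x↦s}δ = Bδ'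
          have hBeq : (B.subst (single x s)).subst δ = B.subst δ' := by
            rw [atom_subst_subst]
            apply atom_subst_congr
            intro y hy
            by_cases hyx : y = x
            · subst hyx; simp [single, hδ'x]
            · simp only [single, if_neg hyx, subst_var]
              exact (hδ'ne y hyx).symm
          have hBΓ : B.subst (single x s) ∈ Γ := by
            rw [← hΓ]
            exact Multiset.mem_add.mpr (Or.inl (Multiset.mem_map.mpr ⟨B, hB, rfl⟩))
          refine Or.inr ⟨(B.subst (single x s)).subst δ, ?_, hBeq ▸ hAI'⟩
          simp only [shSrc, clause_subst_ante, Multiset.mem_map]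
          exact ⟨B.subst (single x s), hBΓ, rfl⟩
  | li M Γ Δ π E E' x x' hnot hlc =>
      classical
      obtain ⟨I, hI⟩ := hsat
      obtain ⟨⟨P, as₁, as₂, t, t', hE, hE', hro⟩, hx', -⟩ := hlc
      refine ⟨I, ?_⟩
      intro c0 hc0
      rcases hc0 with rfl | hc0
      swap
      · exact hI c0 (Set.mem_insert_iff.mpr (Or.inr hc0))
      intro D hD
      obtain ⟨δ, hδ, rfl⟩ := hD
      have hδg : IsGroundSubst δ := solves_ground hδ
      -- freshness of x'
      have hfreshA : ∀ (A : Atom S), (A ∈ Γ ∨ A ∈ E ::ₘ Δ) → x' ∉ A.varList := by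
        rintro A hA hx
        exact hx' (hA.elim (fun h => Or.inl ⟨A, h, hx⟩) (fun h => Or.inr (Or.inl ⟨A, h, hx⟩)))
      have hfreshπ : ∀ y, π.HasVar y → y ≠ x' := by
        rintro y hy rfl
        exact hx' (Or.inr (Or.inr hy))
      have hxE : x ∈ E.varList := by
        rw [hE]
        exact mem_atom_varList.mpr ⟨t, by simp, replone_var_mem hro⟩
      have hxx' : x ≠ x' := by
        rintro rfl
        exact hfreshA E (Or.inr (Multiset.mem_cons_self _ _)) hxE
      set δ' : Subst S := fun y => if y = x' then δ x else δ y with hδ'def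
      have hδ'g : IsGroundSubst δ' := by
        intro y; by_cases hy : y = x' <;> simp [hδ'def, hy] <;> exact hδg _
      have hδ'x' : δ' x' = δ x := by simp [hδ'def]
      have hδ'ne : ∀ y, y ≠ x' → δ' y = δ y := by intro y hy; simp [hδ'def, hy]
      have hsolves : Solves δ' (π.and (π.subst (single x (Term.var x')))) := by
        apply solves_and.mpr
        constructor
        · exact solves_congr hδ'g (fun y hy => hδ'ne y (hfreshπ y hy)) hδ
        · apply solves_subst_of hδ'g ?_ hδ
          intro y hy
          by_cases hyx : y = x
          · subst hyx; simp [single, hδ'x']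
          · simp only [single, if_neg hyx, subst_var]
            exact hδ'ne y (hfreshπ y hy)
      -- the atom congruence for atoms of the source clause
      have hAcong : ∀ (A : Atom S), (A ∈ Γ ∨ A ∈ E ::ₘ Δ) → A.subst δ' = A.subst δ := by
        intro A hA
        apply atom_subst_congr
        intro y hy
        exact hδ'ne y (fun h => hfreshA A hA (h ▸ hy))
      have hres := hI (liRes Γ Δ π E' x x') (Set.mem_insert _ _) _ ⟨δ', hsolves, rfl⟩
      rcases hres with ⟨A, hA, hAI⟩ | ⟨A, hA, hAI⟩
      · -- positive atom from E' ::ₘ Δ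
        simp only [liRes, clause_subst_succ, Multiset.map_cons, Multiset.mem_cons,
          Multiset.mem_map] at hA
        rcases hA with rfl | ⟨B, hB, rfl⟩
        · -- A = E'.subst δ' = E.subst δ
          have hEE : E'.subst δ' = E.subst δ := by
            have h1 : t'.subst δ' = t.subst δ' :=
              replone_subst hro δ' (by rw [hδ'x', hδ'ne x hxx'])
            have h2 : E.subst δ' = E.subst δ :=
              hAcong E (Or.inr (Multiset.mem_cons_self _ _))
            rw [← h2, hE, hE']
            simp [Atom.subst, h1]
          refine Or.inl ⟨E.subst δ, ?_, hEE ▸ hAI⟩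
          simp [liSrc, Clause.subst]
        · have hBeq : B.subst δ' = B.subst δ :=
            hAcong B (Or.inr (Multiset.mem_cons_of_mem hB))
          refine Or.inl ⟨B.subst δ, ?_, hBeq ▸ hAI⟩
          simp only [liSrc, clause_subst_succ, Multiset.map_cons, Multiset.mem_cons,
            Multiset.mem_map]
          exact Or.inr ⟨B, hB, rfl⟩
      · -- negative atom
        simp only [liRes, clause_subst_ante, Multiset.map_add, Multiset.mem_add,
          Multiset.map_map, Multiset.mem_map, Function.comp_apply] at hA
        rcases hA with ⟨B, hB, rfl⟩ | ⟨B, hB, rfl⟩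
        · -- A = (B{x ↦ x'}).subst δ' = B.subst δ
          have hBeq : (B.subst (single x (Term.var x'))).subst δ' = B.subst δ := by
            rw [atom_subst_subst]
            apply atom_subst_congr
            intro y hy
            by_cases hyx : y = x
            · subst hyx; simp [single, hδ'x']
            · simp only [single, if_neg hyx, subst_var]
              exact hδ'ne y (fun h => hfreshA B (Or.inl hB) (h ▸ hy))
          refine Or.inr ⟨B.subst δ, ?_, hBeq ▸ hAI⟩
          simp only [liSrc, clause_subst_ante, Multiset.mem_map]
          exact ⟨B, hB, rfl⟩
        · have hBeq : B.subst δ' = B.subst δ := hAcong B (Or.inl hB)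
          refine Or.inr ⟨B.subst δ, ?_, hBeq ▸ hAI⟩
          simp only [liSrc, clause_subst_ante, Multiset.mem_map]
          exact ⟨B, hB, rfl⟩
  | ref M c x t hnot hrc =>
      obtain ⟨I, hI⟩ := hsat
      refine ⟨I, ?_⟩
      intro c0 hc0
      rcases hc0 with rfl | hc0
      · -- the refined clause
        intro D hD
        obtain ⟨δ, hδ, rfl⟩ := hD
        have hδg : IsGroundSubst δ := solves_ground hδ
        have htfresh : ∀ y ∈ t.varList, ¬ c0.HasVar y := hrc.2.2
        by_cases hinst : IsInstanceOf (δ x) t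
        · -- use refRight
          obtain ⟨σ0, hσ0⟩ := hinst
          classical
          set δ' : Subst S := fun y => if y ∈ t.varList then σ0 y else δ y with hδ'def
          have hδ'g : IsGroundSubst δ' := by
            intro y
            by_cases hy : y ∈ t.varList
            · simp only [hδ'def, if_pos hy]
              exact ground_arg_of_subst t σ0 (hσ0 ▸ hδg x) y hy
            · simp only [hδ'def, if_neg hy]; exact hδg y
          have ht : t.subst δ' = δ x := by
            rw [subst_congr t δ' σ0 (fun y hy => by simp [hδ'def, if_pos hy])]
            exact hσ0.symm
          have hkey : ∀ (A : Atom S), (∀ y ∈ A.varList, ¬ y ∈ t.varList) →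
              (A.subst (single x t)).subst δ' = A.subst δ := by
            intro A hA
            rw [atom_subst_subst]
            apply atom_subst_congr
            intro y hy
            by_cases hyx : y = x
            · subst hyx; simp [single, ht]
            · simp only [single, if_neg hyx, subst_var, hδ'def, if_neg (hA y hy)]
          have hfreshA : ∀ (A : Atom S), (A ∈ c0.1.ante ∨ A ∈ c0.1.succ) →
              ∀ y ∈ A.varList, ¬ y ∈ t.varList := by
            rintro A hA y hy hyt
            exact htfresh y hyt (hA.elim (fun h => Or.inl ⟨A, h, hy⟩)
              (fun h => Or.inr (Or.inl ⟨A, h, hy⟩)))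
          have hsolves' : Solves δ' (c0.2.subst (single x t)) := by
            apply solves_subst_of hδ'g ?_ hδ
            intro y hy
            by_cases hyx : y = x
            · subst hyx; simp [single, ht]
            · have hyt : ¬ y ∈ t.varList := fun hmem =>
                htfresh y hmem (Or.inr (Or.inr hy))
              simp only [single, if_neg hyx, subst_var, hδ'def, if_neg hyt]
          have hm : ∀ (s : Multiset (Atom S)), (∀ A ∈ s, A ∈ c0.1.ante ∨ A ∈ c0.1.succ) →
              s.map (Atom.subst δ) = s.map (Atom.subst δ' ∘ Atom.subst (single x t)) := by
            intro s hs
            apply Multiset.map_congr rfl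
            intro A hA
            exact (hkey A (hfreshA A (hs A hA))).symm
          have hD' : c0.1.subst δ = (refRight c0 x t).1.subst δ' := by
            show c0.1.subst δ = (c0.1.subst (single x t)).subst δ'
            unfold Clause.subst
            simp only [Multiset.map_map]
            congr 1
            · exact hm c0.1.ante (fun A hA => Or.inl hA)
            · exact hm c0.1.succ (fun A hA => Or.inr hA)
          exact hI (refRight c0 x t)
            (Set.mem_insert_iff.mpr (Or.inr (Set.mem_insert _ _))) _ ⟨δ', hsolves', hD'⟩
        · -- use refLeft
          have hsl : Solves δ (c0.2.and (.conj [(Term.var x, t)])) := by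
            apply solves_and.mpr
            refine ⟨hδ, hδg, ?_⟩
            intro p hp
            simp only [List.mem_singleton] at hp
            subst hp
            simpa using hinst
          exact hI (refLeft c0 x t) (Set.mem_insert _ _) _ ⟨δ, hsl, rfl⟩
      · exact hI c0 (Set.mem_insert_iff.mpr (Or.inr (Set.mem_insert_iff.mpr (Or.inr hc0))))

end SDCPaper
end
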